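/- arXiv:1210.7503 — 7 statements merged into one kernel-verified Lean document; each statement's English description precedes it below -/
import Mathlib

section
/- If X_1,...,X_n are drawn sequentially without replacement from {x_1,...,x_n} with M = sum x_i and B = sum x_i^2, T_k = X_1^2+...+X_k^2, and S_k = X_1+...+X_k, then E[S_{k+1}^2 | F_k] = ((n-k-2)/(n-k)) S_k^2 + (2M/(n-k)) S_k - (1/(n-k)) T_k + B/(n-k). -/
open MeasureTheory Finset

noncomputable section

instance permMS (n : ℕ) : MeasurableSpace (Equiv.Perm (Fin n)) := ⊤

instance permNE (n : ℕ) : Nonempty (Equiv.Perm (Fin n)) := ⟨1⟩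

/-- uniform probability measure on the n! orderings: sampling without replacement. -/
def permMeasure (n : ℕ) : Measure (Equiv.Perm (Fin n)) :=
  (PMF.uniformOfFintype (Equiv.Perm (Fin n))).toMeasure

/-- `X n x i σ` : the `(i+1)`-st sample (0-based `i`) drawn without replacement. -/
def X (n : ℕ) (x : Fin n → ℝ) (i : ℕ) (σ : Equiv.Perm (Fin n)) : ℝ :=
  if h : i < n then x (σ ⟨i, h⟩) else 0

/-- partial sum `S_k = X_1 + ⋯ + X_k`. -/
def S (n : ℕ) (x : Fin n → ℝ) (k : ℕ) (σ : Equiv.Perm (Fin n)) : ℝ :=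
  ∑ i ∈ Finset.range k, X n x i σ

/-- partial sum of squares `T_k = X_1^2 + ⋯ + X_k^2`. -/
def T (n : ℕ) (x : Fin n → ℝ) (k : ℕ) (σ : Equiv.Perm (Fin n)) : ℝ :=
  ∑ i ∈ Finset.range k, (X n x i σ) ^ 2

/-- `F_k = σ(X_1, ..., X_k)`. -/
def F (n : ℕ) (x : Fin n → ℝ) (k : ℕ) : MeasurableSpace (Equiv.Perm (Fin n)) :=
  MeasurableSpace.comap (fun σ => fun i : Fin k => X n x i σ) inferInstance

-- sum over the "low" indices, as a Fin-indexed sum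
lemma sum_low_eq (n k : ℕ) (hkn : k ≤ n) (v : Fin n → ℝ) (σ : Equiv.Perm (Fin n)) :
    ∑ i ∈ univ.filter (fun i : Fin n => i.val < k), v (σ i)
      = ∑ i ∈ Finset.range k, (if h : i < n then v (σ ⟨i, h⟩) else 0) := by
  refine Finset.sum_bij (fun (a : Fin n) _ => a.val) ?_ ?_ ?_ ?_
  · intro a ha; simp only [mem_filter] at ha; simpa using ha.2
  · intro a _ b _ h; exact Fin.ext h
  · intro b hb
    simp only [Finset.mem_range] at hb
    have h : b < n := lt_of_lt_of_le hb hkn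
    exact ⟨⟨b, h⟩, by simp [hb], rfl⟩
  · intro a ha
    have h : a.val < n := a.isLt
    simp [h]

lemma S_eq (n : ℕ) (x : Fin n → ℝ) (k : ℕ) (hkn : k ≤ n) (σ : Equiv.Perm (Fin n)) :
    S n x k σ = ∑ i ∈ univ.filter (fun i : Fin n => i.val < k), x (σ i) := by
  rw [sum_low_eq n k hkn x σ]; rfl

lemma T_eq (n : ℕ) (x : Fin n → ℝ) (k : ℕ) (hkn : k ≤ n) (σ : Equiv.Perm (Fin n)) :
    T n x k σ = ∑ i ∈ univ.filter (fun i : Fin n => i.val < k), (x (σ i))^2 := by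
  rw [sum_low_eq n k hkn (fun j => (x j)^2) σ]
  unfold T X
  refine Finset.sum_congr rfl fun i hi => ?_
  simp only [Finset.mem_range] at hi
  have h : i < n := lt_of_lt_of_le hi hkn
  simp [h]

lemma card_high (n k : ℕ) (hkn : k ≤ n) :
    (univ.filter (fun i : Fin n => k ≤ i.val)).card = n - k := by
  have : (univ.filter (fun i : Fin n => k ≤ i.val)).card
      = ((Finset.range n).filter (fun i => k ≤ i)).card := by
    refine Finset.card_nbij (fun i => i.val) ?_ ?_ ?_
    · intro a ha; simp only [mem_filter] at ha ⊢; exact Finset.mem_filter.mpr ⟨Finset.mem_range.mpr a.isLt, by simpa using ha⟩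
    · intro a _ b _ h; exact Fin.ext h
    · intro a ha; simp only [Finset.coe_filter, Set.mem_setOf_eq, Finset.mem_range,
        Finset.coe_univ, Set.mem_image] at ha ⊢
      exact ⟨⟨a, ha.1⟩, by simp [ha.2]⟩
  rw [this]
  have : (Finset.range n).filter (fun i => k ≤ i) = Finset.Ico k n := by
    ext a; simp [Finset.mem_Ico, and_comm]
  rw [this, Nat.card_Ico]

lemma keyA (n k : ℕ) (hk : k < n) (v : Fin n → ℝ) (w : Equiv.Perm (Fin n) → ℝ)
    (hw : ∀ σ τ : Equiv.Perm (Fin n), (∀ i : Fin n, i.val < k → σ i = τ i) → w σ = w τ) :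
    ((n:ℝ) - k) * ∑ σ : Equiv.Perm (Fin n), w σ * v (σ ⟨k, hk⟩)
      = ∑ σ : Equiv.Perm (Fin n), w σ *
          ((∑ j, v j) - ∑ i ∈ univ.filter (fun i : Fin n => i.val < k), v (σ i)) := by
  have step : ∀ i : Fin n, k ≤ i.val →
      (∑ σ : Equiv.Perm (Fin n), w σ * v (σ i))
        = ∑ σ : Equiv.Perm (Fin n), w σ * v (σ ⟨k, hk⟩) := by
    intro i hi
    have h := Equiv.sum_comp (Equiv.mulRight (Equiv.swap (⟨k, hk⟩ : Fin n) i))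
      (fun σ => w σ * v (σ i))
    rw [← h]
    refine Finset.sum_congr rfl fun σ _ => ?_
    have h1 : w (σ * Equiv.swap (⟨k, hk⟩ : Fin n) i) = w σ := by
      refine hw _ _ fun j hj => ?_
      have hj1 : j ≠ (⟨k, hk⟩ : Fin n) := by
        intro h; apply absurd hj; simp [h]
      have hj2 : j ≠ i := by
        intro h; subst h; omega
      simp [Equiv.Perm.mul_apply, Equiv.swap_apply_of_ne_of_ne hj1 hj2]
    have h2 : (σ * Equiv.swap (⟨k, hk⟩ : Fin n) i) i = σ ⟨k, hk⟩ := by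
      simp [Equiv.Perm.mul_apply]
    simp only [Equiv.coe_mulRight, h1, h2]
  have hcard := card_high n k (le_of_lt hk)
  calc ((n:ℝ) - k) * ∑ σ : Equiv.Perm (Fin n), w σ * v (σ ⟨k, hk⟩)
      = ∑ i ∈ univ.filter (fun i : Fin n => k ≤ i.val),
          ∑ σ : Equiv.Perm (Fin n), w σ * v (σ i) := by
        rw [Finset.sum_congr rfl (fun i hi => step i (by simpa using (Finset.mem_filter.mp hi).2))]
        rw [Finset.sum_const, hcard, nsmul_eq_mul]
        congr 1
        push_cast [Nat.cast_sub (le_of_lt hk)]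
        ring
    _ = ∑ σ : Equiv.Perm (Fin n), ∑ i ∈ univ.filter (fun i : Fin n => k ≤ i.val),
          w σ * v (σ i) := Finset.sum_comm
    _ = ∑ σ : Equiv.Perm (Fin n), w σ *
          ((∑ j, v j) - ∑ i ∈ univ.filter (fun i : Fin n => i.val < k), v (σ i)) := by
        refine Finset.sum_congr rfl fun σ _ => ?_
        rw [← Finset.mul_sum]
        congr 1
        have hsplit := Finset.sum_filter_add_sum_filter_not univ (fun i : Fin n => i.val < k)
          (fun i => v (σ i))
        have hall : ∑ i : Fin n, v (σ i) = ∑ j, v j := Equiv.sum_comp σ v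
        have hnot : univ.filter (fun i : Fin n => ¬ i.val < k)
            = univ.filter (fun i : Fin n => k ≤ i.val) := by
          ext a; simp [not_lt]
        rw [hnot, hall] at hsplit
        linarith

lemma S_inv (n : ℕ) (x : Fin n → ℝ) (k : ℕ) (hkn : k ≤ n) (σ τ : Equiv.Perm (Fin n))
    (h : ∀ i : Fin n, i.val < k → σ i = τ i) : S n x k σ = S n x k τ := by
  rw [S_eq n x k hkn σ, S_eq n x k hkn τ]
  refine Finset.sum_congr rfl fun i hi => ?_
  rw [h i (by simpa using (Finset.mem_filter.mp hi).2)]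

lemma T_inv (n : ℕ) (x : Fin n → ℝ) (k : ℕ) (hkn : k ≤ n) (σ τ : Equiv.Perm (Fin n))
    (h : ∀ i : Fin n, i.val < k → σ i = τ i) : T n x k σ = T n x k τ := by
  rw [T_eq n x k hkn σ, T_eq n x k hkn τ]
  refine Finset.sum_congr rfl fun i hi => ?_
  rw [h i (by simpa using (Finset.mem_filter.mp hi).2)]

lemma keyB (n : ℕ) (x : Fin n → ℝ) (M B : ℝ)
    (hM : ∑ i, x i = M) (hB : ∑ i, (x i) ^ 2 = B)
    (k : ℕ) (hk : k + 1 ≤ n) (w : Equiv.Perm (Fin n) → ℝ)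
    (hw : ∀ σ τ : Equiv.Perm (Fin n), (∀ i : Fin n, i.val < k → σ i = τ i) → w σ = w τ) :
    ∑ σ : Equiv.Perm (Fin n), w σ * (S n x (k+1) σ)^2
      = ∑ σ : Equiv.Perm (Fin n), w σ *
          (((n : ℝ) - k - 2) / ((n : ℝ) - k) * (S n x k σ) ^ 2
            + (2 * M / ((n : ℝ) - k)) * S n x k σ
            - (1 / ((n : ℝ) - k)) * T n x k σ + B / ((n : ℝ) - k)) := by
  have hkn : k < n := hk
  have hkle : k ≤ n := le_of_lt hkn
  have hnk : ((n:ℝ) - k) ≠ 0 := by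
    have : (k:ℝ) < n := by exact_mod_cast hkn
    linarith
  apply mul_left_cancel₀ hnk
  have A2 : ((n:ℝ) - k) * ∑ σ : Equiv.Perm (Fin n), w σ * (x (σ ⟨k, hkn⟩))^2
      = ∑ σ : Equiv.Perm (Fin n), w σ *
          ((∑ j, (x j)^2) - ∑ i ∈ univ.filter (fun i : Fin n => i.val < k), (x (σ i))^2) :=
    keyA n k hkn (fun j => (x j)^2) w hw
  have A3 : ((n:ℝ) - k) * ∑ σ : Equiv.Perm (Fin n), (w σ * (2 * S n x k σ)) * x (σ ⟨k, hkn⟩)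
      = ∑ σ : Equiv.Perm (Fin n), (w σ * (2 * S n x k σ)) *
          ((∑ j, x j) - ∑ i ∈ univ.filter (fun i : Fin n => i.val < k), x (σ i)) :=
    keyA n k hkn x (fun σ => w σ * (2 * S n x k σ)) (by
      intro σ τ h
      show w σ * (2 * S n x k σ) = w τ * (2 * S n x k τ)
      rw [hw σ τ h, S_inv n x k hkle σ τ h])
  -- expand S (k+1)
  have hS1 : ∀ σ : Equiv.Perm (Fin n), S n x (k+1) σ = S n x k σ + x (σ ⟨k, hkn⟩) := by
    intro σ
    unfold S
    rw [Finset.sum_range_succ]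
    congr 1
    unfold X
    simp [hkn]
  calc ((n:ℝ) - k) * ∑ σ : Equiv.Perm (Fin n), w σ * (S n x (k+1) σ)^2
      = (((n:ℝ) - k) * ∑ σ : Equiv.Perm (Fin n), w σ * (S n x k σ)^2)
        + (((n:ℝ) - k) * ∑ σ : Equiv.Perm (Fin n), (w σ * (2 * S n x k σ)) * x (σ ⟨k, hkn⟩))
        + (((n:ℝ) - k) * ∑ σ : Equiv.Perm (Fin n), w σ * (x (σ ⟨k, hkn⟩))^2) := by
        rw [Finset.mul_sum, Finset.mul_sum, Finset.mul_sum, Finset.mul_sum,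
          ← Finset.sum_add_distrib, ← Finset.sum_add_distrib]
        refine Finset.sum_congr rfl fun σ _ => ?_
        rw [hS1 σ]; ring
    _ = (((n:ℝ) - k) * ∑ σ : Equiv.Perm (Fin n), w σ * (S n x k σ)^2)
        + (∑ σ : Equiv.Perm (Fin n), (w σ * (2 * S n x k σ)) * (M - S n x k σ))
        + (∑ σ : Equiv.Perm (Fin n), w σ * (B - T n x k σ)) := by
        rw [A3, A2]
        congr 1
        · congr 1
          refine Finset.sum_congr rfl fun σ _ => ?_
          rw [hM, ← S_eq n x k hkle σ]
        · refine Finset.sum_congr rfl fun σ _ => ?_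
          rw [hB, ← T_eq n x k hkle σ]
    _ = ((n:ℝ) - k) * ∑ σ : Equiv.Perm (Fin n), w σ *
          (((n : ℝ) - k - 2) / ((n : ℝ) - k) * (S n x k σ) ^ 2
            + (2 * M / ((n : ℝ) - k)) * S n x k σ
            - (1 / ((n : ℝ) - k)) * T n x k σ + B / ((n : ℝ) - k)) := by
        rw [Finset.mul_sum, ← Finset.sum_add_distrib, ← Finset.sum_add_distrib,
          Finset.mul_sum]
        refine Finset.sum_congr rfl fun σ _ => ?_
        field_simp
        ring

theorem statement1 (n : ℕ) (x : Fin n → ℝ) (M B : ℝ)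
    (hM : ∑ i, x i = M) (hB : ∑ i, (x i) ^ 2 = B)
    (k : ℕ) (hk : k + 1 ≤ n) :
    (permMeasure n)[fun σ => (S n x (k + 1) σ) ^ 2|F n x k]
      =ᵐ[permMeasure n]
        fun σ => ((n : ℝ) - k - 2) / ((n : ℝ) - k) * (S n x k σ) ^ 2
          + (2 * M / ((n : ℝ) - k)) * S n x k σ
          - (1 / ((n : ℝ) - k)) * T n x k σ + B / ((n : ℝ) - k) := by
  classical
  have hkn : k < n := hk
  have hkle : k ≤ n := le_of_lt hkn
  haveI : MeasurableSingletonClass (Equiv.Perm (Fin n)) := ⟨fun _ => trivial⟩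
  set μ := permMeasure n with hμ
  haveI : IsProbabilityMeasure μ := PMF.toMeasure.isProbabilityMeasure _
  have hm : F n x k ≤ permMS n := le_top
  haveI : SigmaFinite (μ.trim hm) := by
    haveI := isFiniteMeasure_trim (μ := μ) hm
    infer_instance
  set p : Equiv.Perm (Fin n) → (Fin k → ℝ) := fun σ => fun i : Fin k => X n x i σ with hp
  set g : Equiv.Perm (Fin n) → ℝ := fun σ =>
    ((n : ℝ) - k - 2) / ((n : ℝ) - k) * (S n x k σ) ^ 2
      + (2 * M / ((n : ℝ) - k)) * S n x k σ
      - (1 / ((n : ℝ) - k)) * T n x k σ + B / ((n : ℝ) - k) with hg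
  have hSp : ∀ σ, S n x k σ = ∑ i : Fin k, p σ i := by
    intro σ
    rw [Fin.sum_univ_eq_sum_range (fun i => X n x i σ) k]
    rfl
  have hTp : ∀ σ, T n x k σ = ∑ i : Fin k, (p σ i) ^ 2 := by
    intro σ
    rw [Fin.sum_univ_eq_sum_range (fun i => (X n x i σ) ^ 2) k]
    rfl
  have hpm : Measurable[F n x k] p := measurable_iff_comap_le.mpr le_rfl
  have hgm : Measurable[F n x k] g := by
    have hφ : Measurable (fun c : Fin k → ℝ =>
        ((n : ℝ) - k - 2) / ((n : ℝ) - k) * (∑ i : Fin k, c i) ^ 2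
          + (2 * M / ((n : ℝ) - k)) * (∑ i : Fin k, c i)
          - (1 / ((n : ℝ) - k)) * (∑ i : Fin k, (c i) ^ 2) + B / ((n : ℝ) - k)) := by
      fun_prop
    have : g = (fun c : Fin k → ℝ =>
        ((n : ℝ) - k - 2) / ((n : ℝ) - k) * (∑ i : Fin k, c i) ^ 2
          + (2 * M / ((n : ℝ) - k)) * (∑ i : Fin k, c i)
          - (1 / ((n : ℝ) - k)) * (∑ i : Fin k, (c i) ^ 2) + B / ((n : ℝ) - k)) ∘ p := by
      funext σ
      simp only [hg, Function.comp_apply, hSp σ, hTp σ]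
    rw [this]
    exact hφ.comp hpm
  refine (ae_eq_condExp_of_forall_setIntegral_eq hm (Integrable.of_finite)
    (fun s _ _ => Integrable.integrableOn Integrable.of_finite) ?_
    ⟨g, hgm.stronglyMeasurable, Filter.EventuallyEq.refl _ _⟩).symm
  rintro s ⟨t, ht, rfl⟩ -
  have hsm : MeasurableSet (p ⁻¹' t) := trivial
  rw [← integral_indicator hsm, ← integral_indicator hsm,
    integral_fintype Integrable.of_finite, integral_fintype Integrable.of_finite]
  set w : Equiv.Perm (Fin n) → ℝ := fun σ => (μ {σ}).toReal * (if p σ ∈ t then 1 else 0)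
    with hwdef
  have hl : ∀ (f : Equiv.Perm (Fin n) → ℝ) (σ : Equiv.Perm (Fin n)),
      (μ {σ}).toReal • Set.indicator (p ⁻¹' t) f σ = w σ * f σ := by
    intro f σ
    by_cases hσ : p σ ∈ t <;>
      simp [Set.indicator_apply, Set.mem_preimage, hσ, hwdef]
  have hw : ∀ σ τ : Equiv.Perm (Fin n), (∀ i : Fin n, i.val < k → σ i = τ i) → w σ = w τ := by
    intro σ τ h
    have hμeq : μ {σ} = μ {τ} := by
      rw [hμ, permMeasure, PMF.toMeasure_apply_singleton _ _ (measurableSet_singleton _),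
        PMF.toMeasure_apply_singleton _ _ (measurableSet_singleton _)]
      simp [PMF.uniformOfFintype_apply]
    have hpeq : p σ = p τ := by
      funext i
      have hi : (i : ℕ) < n := lt_of_lt_of_le i.isLt hkle
      show X n x i σ = X n x i τ
      unfold X
      rw [dif_pos hi, dif_pos hi, h ⟨i, hi⟩ i.isLt]
    simp [hwdef, hμeq, hpeq]
  calc ∑ σ : Equiv.Perm (Fin n), (μ {σ}).toReal • Set.indicator (p ⁻¹' t) g σ
      = ∑ σ : Equiv.Perm (Fin n), w σ * g σ := Finset.sum_congr rfl fun σ _ => hl g σ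
    _ = ∑ σ : Equiv.Perm (Fin n), w σ * (S n x (k+1) σ)^2 :=
        (keyB n x M B hM hB k hk w hw).symm
    _ = ∑ σ : Equiv.Perm (Fin n), (μ {σ}).toReal •
          Set.indicator (p ⁻¹' t) (fun σ => (S n x (k+1) σ)^2) σ :=
        Finset.sum_congr rfl fun σ _ => (hl (fun σ => (S n x (k+1) σ)^2) σ).symm

end
end

section
/- If X_1,...,X_n are drawn sequentially without replacement from a set of reals with total sum 0 and sum of squares B, then the process M_k = [(n-1) S_k^2 - k (B - T_k)] / ((n-k)(n-k-1)), for 1 <= k <= n-2, is a martingale with respect to F_k = sigma(X_1,...,X_k), where S_k = X_1+...+X_k and T_k = X_1^2+...+X_k^2. -/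
open MeasureTheory Finset

noncomputable section

instance permMSC (n : ℕ) : MeasurableSingletonClass (Equiv.Perm (Fin n)) :=
  ⟨fun _ => trivial⟩

instance permProb (n : ℕ) : IsProbabilityMeasure (permMeasure n) :=
  PMF.toMeasure.isProbabilityMeasure _

lemma mart_stronglyMeasurable (n : ℕ) (x : Fin n → ℝ) (k : ℕ) (B : ℝ)
    (Mart : ℕ → Equiv.Perm (Fin n) → ℝ)
    (hMart : ∀ k σ, Mart k σ =
      ((n : ℝ) - 1) * (S n x k σ) ^ 2 / (((n : ℝ) - k) * ((n : ℝ) - k - 1))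
        - k * (B - T n x k σ) / (((n : ℝ) - k) * ((n : ℝ) - k - 1))) :
    StronglyMeasurable[F n x k] (Mart k) := by
  have hg : Measurable (fun v : Fin k → ℝ =>
      ((n : ℝ) - 1) * (∑ i, v i) ^ 2 / (((n : ℝ) - k) * ((n : ℝ) - k - 1))
        - k * (B - ∑ i, (v i) ^ 2) / (((n : ℝ) - k) * ((n : ℝ) - k - 1))) := by
    measurability
  have : Mart k = (fun v : Fin k → ℝ =>
      ((n : ℝ) - 1) * (∑ i, v i) ^ 2 / (((n : ℝ) - k) * ((n : ℝ) - k - 1))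
        - k * (B - ∑ i, (v i) ^ 2) / (((n : ℝ) - k) * ((n : ℝ) - k - 1))) ∘
      (fun σ => fun i : Fin k => X n x i σ) := by
    funext σ
    simp only [Function.comp_apply, hMart, S, T]
    rw [Fin.sum_univ_eq_sum_range (fun i => X n x i σ) k,
      Fin.sum_univ_eq_sum_range (fun i => (X n x i σ) ^ 2) k]
  rw [this]
  exact (hg.comp (Measurable.of_comap_le le_rfl)).stronglyMeasurable

lemma card_subfiber_eq {n k : ℕ} (hkn : k < n) (v : Fin k → Fin n) {a b : Fin n}
    (ha : ∀ i, v i ≠ a) (hb : ∀ i, v i ≠ b) :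
    ((univ.filter fun σ : Equiv.Perm (Fin n) =>
      (∀ i : Fin k, σ (Fin.castLE hkn.le i) = v i) ∧ σ ⟨k, hkn⟩ = a)).card =
    ((univ.filter fun σ : Equiv.Perm (Fin n) =>
      (∀ i : Fin k, σ (Fin.castLE hkn.le i) = v i) ∧ σ ⟨k, hkn⟩ = b)).card := by
  apply Finset.card_bij (fun σ _ => Equiv.swap a b * σ)
  · intro σ hσ
    simp only [mem_filter, mem_univ, true_and] at hσ ⊢
    obtain ⟨h1, h2⟩ := hσ
    refine ⟨fun i => ?_, ?_⟩
    · rw [Equiv.Perm.mul_apply, h1 i, Equiv.swap_apply_of_ne_of_ne (ha i) (hb i)]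
    · rw [Equiv.Perm.mul_apply, h2, Equiv.swap_apply_left]
  · intro σ1 _ σ2 _ h; exact mul_left_cancel h
  · intro τ hτ
    refine ⟨Equiv.swap a b * τ, ?_, by rw [← mul_assoc, Equiv.swap_mul_self, one_mul]⟩
    simp only [mem_filter, mem_univ, true_and] at hτ ⊢
    obtain ⟨h1, h2⟩ := hτ
    refine ⟨fun i => ?_, ?_⟩
    · rw [Equiv.Perm.mul_apply, h1 i, Equiv.swap_apply_of_ne_of_ne (ha i) (hb i)]
    · rw [Equiv.Perm.mul_apply, h2, Equiv.swap_apply_right]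

lemma fiber_sum {n k : ℕ} (hkn : k < n) (v : Fin k → Fin n) {a0 : Fin n}
    (ha0 : ∀ i, v i ≠ a0) (g : Fin n → ℝ) :
    ∑ σ ∈ (univ.filter fun σ : Equiv.Perm (Fin n) =>
        ∀ i : Fin k, σ (Fin.castLE hkn.le i) = v i), g (σ ⟨k, hkn⟩) =
      (((univ.filter fun σ : Equiv.Perm (Fin n) =>
        (∀ i : Fin k, σ (Fin.castLE hkn.le i) = v i) ∧ σ ⟨k, hkn⟩ = a0)).card : ℝ) *
        ∑ a ∈ (univ.filter fun a : Fin n => ∀ i, v i ≠ a), g a := by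
  set Fib := univ.filter fun σ : Equiv.Perm (Fin n) =>
    ∀ i : Fin k, σ (Fin.castLE hkn.le i) = v i with hFib
  set N := ((univ.filter fun σ : Equiv.Perm (Fin n) =>
    (∀ i : Fin k, σ (Fin.castLE hkn.le i) = v i) ∧ σ ⟨k, hkn⟩ = a0)).card with hN
  have key : ∀ a : Fin n, Fib.filter (fun σ => σ ⟨k, hkn⟩ = a) =
      univ.filter fun σ : Equiv.Perm (Fin n) =>
        (∀ i : Fin k, σ (Fin.castLE hkn.le i) = v i) ∧ σ ⟨k, hkn⟩ = a := by
    intro a; rw [hFib, filter_filter]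
  rw [← Finset.sum_fiberwise Fib (fun σ => σ ⟨k, hkn⟩) (fun σ => g (σ ⟨k, hkn⟩))]
  have step : ∀ a : Fin n, ∑ σ ∈ Fib.filter (fun σ => σ ⟨k, hkn⟩ = a), g (σ ⟨k, hkn⟩)
      = ((Fib.filter (fun σ => σ ⟨k, hkn⟩ = a)).card : ℝ) * g a := by
    intro a
    rw [Finset.sum_congr rfl (fun σ hσ => by rw [(mem_filter.mp hσ).2]), sum_const,
      nsmul_eq_mul]
  calc ∑ a : Fin n, ∑ σ ∈ Fib.filter (fun σ => σ ⟨k, hkn⟩ = a), g (σ ⟨k, hkn⟩)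
      = ∑ a : Fin n, ((Fib.filter (fun σ => σ ⟨k, hkn⟩ = a)).card : ℝ) * g a := by
        exact Finset.sum_congr rfl fun a _ => step a
    _ = ∑ a ∈ (univ.filter fun a : Fin n => ∀ i, v i ≠ a),
          ((Fib.filter (fun σ => σ ⟨k, hkn⟩ = a)).card : ℝ) * g a := by
        refine (Finset.sum_subset (subset_univ _) ?_).symm
        intro a _ ha
        simp only [mem_filter, mem_univ, true_and, not_forall, not_not] at ha
        obtain ⟨i, hi⟩ := ha
        have : Fib.filter (fun σ => σ ⟨k, hkn⟩ = a) = ∅ := by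
          rw [Finset.eq_empty_iff_forall_notMem]
          intro σ hσ
          rw [key a, mem_filter] at hσ
          obtain ⟨-, h1, h2⟩ := hσ
          have : σ (Fin.castLE hkn.le i) = σ ⟨k, hkn⟩ := by rw [h1 i, h2, hi]
          have := σ.injective this
          have hik : (i : ℕ) = k := congrArg Fin.val this
          omega
        rw [this]; simp
    _ = ∑ a ∈ (univ.filter fun a : Fin n => ∀ i, v i ≠ a), (N : ℝ) * g a := by
        refine Finset.sum_congr rfl fun a ha => ?_
        simp only [mem_filter, mem_univ, true_and] at ha
        rw [key a, hN, card_subfiber_eq hkn v ha ha0]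
    _ = (N : ℝ) * ∑ a ∈ (univ.filter fun a : Fin n => ∀ i, v i ≠ a), g a := by
        rw [Finset.mul_sum]

lemma fiber_mart {n k : ℕ} (hkn : k + 3 ≤ n) (x : Fin n → ℝ) (B : ℝ)
    (hx : ∑ i, x i = 0) (hB : ∑ i, (x i) ^ 2 = B)
    (Mart : ℕ → Equiv.Perm (Fin n) → ℝ)
    (hMart : ∀ k σ, Mart k σ =
      ((n : ℝ) - 1) * (S n x k σ) ^ 2 / (((n : ℝ) - k) * ((n : ℝ) - k - 1))
        - k * (B - T n x k σ) / (((n : ℝ) - k) * ((n : ℝ) - k - 1)))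
    (v : Fin k → Fin n) :
    ∑ σ ∈ (univ.filter fun σ : Equiv.Perm (Fin n) =>
        ∀ i : Fin k, σ (Fin.castLE (show k ≤ n by omega) i) = v i), Mart (k+1) σ =
    ∑ σ ∈ (univ.filter fun σ : Equiv.Perm (Fin n) =>
        ∀ i : Fin k, σ (Fin.castLE (show k ≤ n by omega) i) = v i), Mart k σ := by
  have hkn' : k < n := by omega
  set Fib := univ.filter fun σ : Equiv.Perm (Fin n) =>
    ∀ i : Fin k, σ (Fin.castLE hkn'.le i) = v i with hFibdef
  rcases Fib.eq_empty_or_nonempty with hFe | ⟨σ0, hσ0⟩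
  · rw [hFe]; simp
  · have hσ0' : ∀ i : Fin k, σ0 (Fin.castLE hkn'.le i) = v i :=
      (mem_filter.mp hσ0).2
    have hvinj : Function.Injective v := by
      intro i j hij
      have : σ0 (Fin.castLE hkn'.le i) = σ0 (Fin.castLE hkn'.le j) := by
        rw [hσ0' i, hσ0' j, hij]
      have := σ0.injective this
      exact Fin.castLE_injective _ this
    set Kc := univ.filter fun a : Fin n => ∀ i, v i ≠ a with hKcdef
    have hKc_eq : Kc = (Finset.image v univ)ᶜ := by
      ext a
      simp [hKcdef, eq_comm]
    have hKcard : Kc.card = n - k := by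
      rw [hKc_eq, card_compl, Finset.card_image_of_injective _ hvinj]
      simp
    have hsum_im : ∑ a ∈ Finset.image v univ, x a = ∑ i : Fin k, x (v i) :=
      Finset.sum_image (fun i _ j _ h => hvinj h)
    have hsum_im2 : ∑ a ∈ Finset.image v univ, (x a) ^ 2 = ∑ i : Fin k, (x (v i)) ^ 2 :=
      Finset.sum_image (fun i _ j _ h => hvinj h)
    set s := ∑ i : Fin k, x (v i) with hs
    set t := ∑ i : Fin k, (x (v i)) ^ 2 with ht
    have hKx : ∑ a ∈ Kc, x a = -s := by
      have := Finset.sum_compl_add_sum (Finset.image v univ) x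
      rw [hsum_im, hx] at this
      rw [hKc_eq]
      linarith
    have hKx2 : ∑ a ∈ Kc, (x a) ^ 2 = B - t := by
      have := Finset.sum_compl_add_sum (Finset.image v univ) (fun a => (x a) ^ 2)
      rw [hsum_im2, hB] at this
      rw [hKc_eq]
      linarith
    have hKne : Kc.Nonempty := by
      rw [← Finset.card_pos, hKcard]; omega
    obtain ⟨a0, ha0mem⟩ := hKne
    have ha0 : ∀ i, v i ≠ a0 := (mem_filter.mp ha0mem).2
    set N := ((univ.filter fun σ : Equiv.Perm (Fin n) =>
      (∀ i : Fin k, σ (Fin.castLE hkn'.le i) = v i) ∧ σ ⟨k, hkn'⟩ = a0)).card with hNdef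
    have hSk : ∀ σ ∈ Fib, S n x k σ = s := by
      intro σ hσ
      have hσ' : ∀ i : Fin k, σ (Fin.castLE hkn'.le i) = v i := (mem_filter.mp hσ).2
      rw [S, ← Fin.sum_univ_eq_sum_range (fun i => X n x i σ) k]
      refine Finset.sum_congr rfl fun i _ => ?_
      have hi : (i : ℕ) < n := by omega
      show X n x i σ = x (v i)
      rw [X, dif_pos hi]
      congr 1
      rw [← hσ' i]
      congr 1
    have hTk : ∀ σ ∈ Fib, T n x k σ = t := by
      intro σ hσ
      have hσ' : ∀ i : Fin k, σ (Fin.castLE hkn'.le i) = v i := (mem_filter.mp hσ).2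
      rw [T, ← Fin.sum_univ_eq_sum_range (fun i => (X n x i σ) ^ 2) k]
      refine Finset.sum_congr rfl fun i _ => ?_
      have hi : (i : ℕ) < n := by omega
      show (X n x i σ) ^ 2 = (x (v i)) ^ 2
      rw [X, dif_pos hi]
      congr 2
      rw [← hσ' i]
      congr 1
    have hXk : ∀ σ : Equiv.Perm (Fin n), X n x k σ = x (σ ⟨k, hkn'⟩) := by
      intro σ; rw [X, dif_pos hkn']
    have hSk1 : ∀ σ ∈ Fib, S n x (k+1) σ = s + x (σ ⟨k, hkn'⟩) := by
      intro σ hσ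
      rw [S, Finset.sum_range_succ, ← S, hSk σ hσ, hXk]
    have hTk1 : ∀ σ ∈ Fib, T n x (k+1) σ = t + (x (σ ⟨k, hkn'⟩)) ^ 2 := by
      intro σ hσ
      rw [T, Finset.sum_range_succ, ← T, hTk σ hσ, hXk]
    set D' : ℝ := (((n : ℝ) - (k+1:ℕ)) * ((n : ℝ) - (k+1:ℕ) - 1)) with hD'
    set g : Fin n → ℝ := fun a =>
      ((n : ℝ) - 1) * (s + x a) ^ 2 / D' - ((k+1:ℕ) : ℝ) * (B - (t + (x a) ^ 2)) / D'
      with hg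
    have hMartk1 : ∀ σ ∈ Fib, Mart (k+1) σ = g (σ ⟨k, hkn'⟩) := by
      intro σ hσ
      rw [hMart (k+1) σ, hSk1 σ hσ, hTk1 σ hσ, hg]
    set C : ℝ := ((n : ℝ) - 1) * s ^ 2 / (((n : ℝ) - k) * ((n : ℝ) - k - 1))
        - k * (B - t) / (((n : ℝ) - k) * ((n : ℝ) - k - 1)) with hC
    have hMartk : ∀ σ ∈ Fib, Mart k σ = C := by
      intro σ hσ
      rw [hMart k σ, hSk σ hσ, hTk σ hσ]
    rw [Finset.sum_congr rfl hMartk1, Finset.sum_congr rfl hMartk, Finset.sum_const,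
      nsmul_eq_mul]
    rw [fiber_sum hkn' v ha0 g]
    have hcard : (Fib.card : ℝ) = (N : ℝ) * ((n : ℝ) - k) := by
      have h1 := fiber_sum hkn' v ha0 (fun _ => (1:ℝ))
      simp only [Finset.sum_const, nsmul_eq_mul, mul_one] at h1
      rw [hFibdef, h1, hKcard]
      rw [Nat.cast_sub hkn'.le]
    rw [hcard]
    have hsumg : ∑ a ∈ Kc, g a =
        (((n:ℝ) - k) * (((n : ℝ) - 1) * s ^ 2 - ((k+1:ℕ):ℝ) * (B - t))
          + 2 * ((n : ℝ) - 1) * s * (-s)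
          + (((n : ℝ) - 1) + ((k+1:ℕ):ℝ)) * (B - t)) / D' := by
      have expand : ∀ a : Fin n, g a =
          ((((n : ℝ) - 1) * s ^ 2 - ((k+1:ℕ):ℝ) * (B - t)) / D')
          + (2 * ((n : ℝ) - 1) * s / D') * x a
          + ((((n : ℝ) - 1) + ((k+1:ℕ):ℝ)) / D') * ((x a) ^ 2) := by
        intro a; rw [hg]; ring
      rw [Finset.sum_congr rfl fun a _ => expand a]
      rw [Finset.sum_add_distrib, Finset.sum_add_distrib, Finset.sum_const,
        ← Finset.mul_sum, ← Finset.mul_sum, hKx, hKx2, nsmul_eq_mul, hKcard,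
        Nat.cast_sub hkn'.le]
      ring
    rw [hsumg, hC, hD']
    have hcast : ((k:ℝ) + 3) ≤ (n : ℝ) := by exact_mod_cast hkn
    have h1 : (n : ℝ) - k ≠ 0 := by intro h; linarith [h]
    have h2 : (n : ℝ) - k - 1 ≠ 0 := by intro h; linarith [h]
    have h3 : (n : ℝ) - ((k+1:ℕ):ℝ) ≠ 0 := by push_cast; intro h; linarith [h]
    have h4 : (n : ℝ) - ((k+1:ℕ):ℝ) - 1 ≠ 0 := by push_cast; intro h; linarith [h]
    push_cast at *
    field_simp
    ring

lemma sum_mart_eq {n k : ℕ} (hkn : k + 3 ≤ n) (x : Fin n → ℝ) (B : ℝ)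
    (hx : ∑ i, x i = 0) (hB : ∑ i, (x i) ^ 2 = B)
    (Mart : ℕ → Equiv.Perm (Fin n) → ℝ)
    (hMart : ∀ k σ, Mart k σ =
      ((n : ℝ) - 1) * (S n x k σ) ^ 2 / (((n : ℝ) - k) * ((n : ℝ) - k - 1))
        - k * (B - T n x k σ) / (((n : ℝ) - k) * ((n : ℝ) - k - 1)))
    (A : Finset (Equiv.Perm (Fin n)))
    (hA : ∀ σ τ : Equiv.Perm (Fin n),
      (∀ i : Fin k, σ (Fin.castLE (show k ≤ n by omega) i) =
        τ (Fin.castLE (show k ≤ n by omega) i)) → (σ ∈ A ↔ τ ∈ A)) :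
    ∑ σ ∈ A, Mart (k+1) σ = ∑ σ ∈ A, Mart k σ := by
  have hkle : k ≤ n := by omega
  set ρ : Equiv.Perm (Fin n) → (Fin k → Fin n) :=
    fun σ => fun i => σ (Fin.castLE hkle i) with hρ
  rw [← Finset.sum_fiberwise A ρ (Mart (k+1)), ← Finset.sum_fiberwise A ρ (Mart k)]
  refine Finset.sum_congr rfl fun v _ => ?_
  rcases (A.filter (fun σ => ρ σ = v)).eq_empty_or_nonempty with he | ⟨σ0, hσ0⟩
  · rw [he]; simp
  · have hσ0A : σ0 ∈ A := (mem_filter.mp hσ0).1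
    have hσ0v : ρ σ0 = v := (mem_filter.mp hσ0).2
    have hAe : A.filter (fun σ => ρ σ = v) =
        univ.filter fun σ : Equiv.Perm (Fin n) =>
          ∀ i : Fin k, σ (Fin.castLE hkle i) = v i := by
      ext σ
      simp only [mem_filter, mem_univ, true_and]
      constructor
      · rintro ⟨-, hv⟩
        intro i; rw [← hv]
      · intro h
        have hv : ρ σ = v := funext h
        refine ⟨?_, hv⟩
        rw [hA σ σ0 (fun i => by rw [h i, ← congrFun hσ0v i])]
        exact hσ0A
    rw [hAe]
    exact fiber_mart hkn x B hx hB Mart hMart v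

lemma setIntegral_perm (n : ℕ) (s : Set (Equiv.Perm (Fin n)))
    [DecidablePred (fun σ => σ ∈ s)] (f : Equiv.Perm (Fin n) → ℝ) :
    ∫ σ in s, f σ ∂(permMeasure n) =
      ((Fintype.card (Equiv.Perm (Fin n)) : ℝ))⁻¹ *
        ∑ σ ∈ univ.filter (fun σ => σ ∈ s), f σ := by
  have hms : MeasurableSet s := trivial
  rw [← integral_indicator hms, integral_fintype (Integrable.of_finite)]
  have hμ : ∀ σ : Equiv.Perm (Fin n), ((permMeasure n) {σ}).toReal =
      ((Fintype.card (Equiv.Perm (Fin n)) : ℝ))⁻¹ := by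
    intro σ
    rw [permMeasure, PMF.toMeasure_apply_singleton _ _ (measurableSet_singleton σ),
      PMF.uniformOfFintype_apply]
    simp
  simp_rw [measureReal_def, hμ, smul_eq_mul, ← Finset.mul_sum]
  congr 1
  rw [Finset.sum_filter]
  refine Finset.sum_congr rfl fun σ _ => ?_
  by_cases h : σ ∈ s <;> simp [Set.indicator_apply, h]

theorem statement3 (n : ℕ) (x : Fin n → ℝ) (B : ℝ)
    (hx : ∑ i, x i = 0) (hB : ∑ i, (x i) ^ 2 = B)
    (Mart : ℕ → Equiv.Perm (Fin n) → ℝ)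
    (hMart : ∀ k σ, Mart k σ =
      ((n : ℝ) - 1) * (S n x k σ) ^ 2 / (((n : ℝ) - k) * ((n : ℝ) - k - 1))
        - k * (B - T n x k σ) / (((n : ℝ) - k) * ((n : ℝ) - k - 1))) :
    (∀ k, 1 ≤ k → k ≤ n - 2 → StronglyMeasurable[F n x k] (Mart k)) ∧
    (∀ k, 1 ≤ k → k + 1 ≤ n - 2 →
      (permMeasure n)[Mart (k + 1)|F n x k] =ᵐ[permMeasure n] Mart k) := by
  constructor
  · intro k _ _
    exact mart_stronglyMeasurable n x k B Mart hMart
  · intro k hk1 hk2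
    have hkn : k + 3 ≤ n := by omega
    have hle : F n x k ≤ (permMS n) := le_top
    refine (ae_eq_condExp_of_forall_setIntegral_eq hle Integrable.of_finite
      (fun s _ _ => Integrable.of_finite.integrableOn) ?_ ?_).symm
    · intro sset hsset _
      obtain ⟨tset, -, rfl⟩ := hsset
      classical
      rw [setIntegral_perm, setIntegral_perm]
      congr 1
      refine (sum_mart_eq hkn x B hx hB Mart hMart _ ?_).symm
      intro σ τ hστ
      simp only [mem_filter, mem_univ, true_and, Set.mem_preimage]
      have : (fun i : Fin k => X n x i σ) = (fun i : Fin k => X n x i τ) := by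
        funext i
        have hi : (i : ℕ) < n := by omega
        show X n x i σ = X n x i τ
        rw [X, dif_pos hi, X, dif_pos hi]
        have := hστ i
        have h2 : σ ⟨(i:ℕ), hi⟩ = τ ⟨(i:ℕ), hi⟩ := this
        rw [h2]
      rw [this]
    · exact StronglyMeasurable.aestronglyMeasurable (mart_stronglyMeasurable n x k B Mart hMart)

end
end

section
/- If X_1,X_2,X_3,X_4 are the first four samples drawn without replacement from reals x_1,...,x_n (n >= 4) summing to 0, then E[X_1 X_2 X_3 X_4] = (3B^2 - 6Q)/(n(n-1)(n-2)(n-3)), where B = sum x_i^2 and Q = sum x_i^4. -/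
open MeasureTheory Finset Equiv

noncomputable section

lemma swap_sum (m : ℕ) (p : Fin (m+1)) (f : Fin (m+1) → ℝ) :
    ∑ j : Fin m, f (Equiv.swap 0 p j.succ) = (∑ i, f i) - f p := by
  have h := Equiv.sum_comp (Equiv.swap 0 p) f
  rw [Fin.sum_univ_succ, Equiv.swap_apply_left] at h
  linarith

lemma perm_sum1 (m : ℕ) (f : Fin (m+1) → ℝ) :
    ∑ σ : Perm (Fin (m+1)), f (σ 0) = (Nat.factorial m : ℝ) * ∑ i, f i := by
  rw [← Equiv.sum_comp Equiv.Perm.decomposeFin.symm (fun σ => f (σ 0)),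
    Fintype.sum_prod_type]
  simp [Equiv.Perm.decomposeFin_symm_apply_zero, Fintype.card_perm, mul_comm]
  rw [← Finset.sum_mul]
  ring

lemma perm_sum2 (m : ℕ) (x : Fin (m+2) → ℝ) :
    ∑ σ : Perm (Fin (m+2)), x (σ 0) * x (σ 1)
      = (Nat.factorial m : ℝ) * ((∑ i, x i)^2 - ∑ i, (x i)^2) := by
  rw [← Equiv.sum_comp Equiv.Perm.decomposeFin.symm
      (fun σ => x (σ 0) * x (σ 1)), Fintype.sum_prod_type]
  have key : ∀ p : Fin (m+2),
      ∑ e : Perm (Fin (m+1)),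
        x ((Equiv.Perm.decomposeFin.symm (p, e)) 0) *
        x ((Equiv.Perm.decomposeFin.symm (p, e)) 1)
      = x p * ((Nat.factorial m : ℝ) * ((∑ i, x i) - x p)) := by
    intro p
    have h1 : (1 : Fin (m+2)) = Fin.succ 0 := rfl
    simp only [Equiv.Perm.decomposeFin_symm_apply_zero, h1,
      Equiv.Perm.decomposeFin_symm_apply_succ]
    rw [← Finset.mul_sum]
    congr 1
    rw [perm_sum1 m (fun j => x (Equiv.swap 0 p j.succ))]
    · congr 1
      exact swap_sum (m+1) p x
  rw [Finset.sum_congr rfl (fun p _ => key p)]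
  set s1 := ∑ i, x i
  calc ∑ p, x p * ((Nat.factorial m : ℝ) * (s1 - x p))
      = ∑ p, ((Nat.factorial m : ℝ) * s1 * x p - (Nat.factorial m : ℝ) * (x p)^2) :=
        Finset.sum_congr rfl (fun p _ => by ring)
    _ = (Nat.factorial m : ℝ) * s1 * ∑ p, x p - (Nat.factorial m : ℝ) * ∑ p, (x p)^2 := by
        rw [Finset.sum_sub_distrib, ← Finset.mul_sum, ← Finset.mul_sum]
    _ = _ := by ring

lemma perm_sum3 (m : ℕ) (x : Fin (m+3) → ℝ) :
    ∑ σ : Perm (Fin (m+3)), x (σ 0) * x (σ 1) * x (σ 2)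
      = (Nat.factorial m : ℝ) *
        ((∑ i, x i)^3 - 3 * (∑ i, x i) * (∑ i, (x i)^2) + 2 * ∑ i, (x i)^3) := by
  rw [← Equiv.sum_comp Equiv.Perm.decomposeFin.symm
      (fun σ => x (σ 0) * x (σ 1) * x (σ 2)), Fintype.sum_prod_type]
  have key : ∀ p : Fin (m+3),
      ∑ e : Perm (Fin (m+2)),
        x ((Equiv.Perm.decomposeFin.symm (p, e)) 0) *
        x ((Equiv.Perm.decomposeFin.symm (p, e)) 1) *
        x ((Equiv.Perm.decomposeFin.symm (p, e)) 2)
      = x p * ((Nat.factorial m : ℝ) *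
          (((∑ i, x i) - x p)^2 - ((∑ i, (x i)^2) - (x p)^2))) := by
    intro p
    have h1 : (1 : Fin (m+3)) = Fin.succ 0 := rfl
    have h2 : (2 : Fin (m+3)) = Fin.succ 1 := rfl
    simp only [Equiv.Perm.decomposeFin_symm_apply_zero, h1, h2,
      Equiv.Perm.decomposeFin_symm_apply_succ, mul_assoc]
    rw [← Finset.mul_sum]
    congr 1
    rw [perm_sum2 m (fun j => x (Equiv.swap 0 p j.succ)),
      swap_sum (m+2) p x, swap_sum (m+2) p (fun i => (x i)^2)]
  rw [Finset.sum_congr rfl (fun p _ => key p)]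
  set s1 := ∑ i, x i
  set s2 := ∑ i, (x i)^2
  set C := (Nat.factorial m : ℝ)
  calc ∑ p, x p * (C * ((s1 - x p)^2 - (s2 - (x p)^2)))
      = ∑ p, (C * (s1^2 - s2) * x p - 2*C*s1 * (x p)^2 + 2*C * (x p)^3) :=
        Finset.sum_congr rfl (fun p _ => by ring)
    _ = C * (s1^2 - s2) * ∑ p, x p - 2*C*s1 * ∑ p, (x p)^2 + 2*C * ∑ p, (x p)^3 := by
        rw [Finset.sum_add_distrib, Finset.sum_sub_distrib,
          ← Finset.mul_sum, ← Finset.mul_sum, ← Finset.mul_sum]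
    _ = _ := by ring

lemma perm_sum4 (m : ℕ) (x : Fin (m+4) → ℝ) :
    ∑ σ : Perm (Fin (m+4)), x (σ 0) * x (σ 1) * x (σ 2) * x (σ 3)
      = (Nat.factorial m : ℝ) *
        ((∑ i, x i)^4 - 6 * (∑ i, x i)^2 * (∑ i, (x i)^2) + 3 * (∑ i, (x i)^2)^2
          + 8 * (∑ i, x i) * (∑ i, (x i)^3) - 6 * ∑ i, (x i)^4) := by
  rw [← Equiv.sum_comp Equiv.Perm.decomposeFin.symm
      (fun σ => x (σ 0) * x (σ 1) * x (σ 2) * x (σ 3)), Fintype.sum_prod_type]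
  have key : ∀ p : Fin (m+4),
      ∑ e : Perm (Fin (m+3)),
        x ((Equiv.Perm.decomposeFin.symm (p, e)) 0) *
        x ((Equiv.Perm.decomposeFin.symm (p, e)) 1) *
        x ((Equiv.Perm.decomposeFin.symm (p, e)) 2) *
        x ((Equiv.Perm.decomposeFin.symm (p, e)) 3)
      = x p * ((Nat.factorial m : ℝ) *
          (((∑ i, x i) - x p)^3
            - 3 * ((∑ i, x i) - x p) * ((∑ i, (x i)^2) - (x p)^2)
            + 2 * ((∑ i, (x i)^3) - (x p)^3))) := by
    intro p
    have h1 : (1 : Fin (m+4)) = Fin.succ 0 := rfl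
    have h2 : (2 : Fin (m+4)) = Fin.succ 1 := rfl
    have h3 : (3 : Fin (m+4)) = Fin.succ 2 := rfl
    have step : ∀ e : Perm (Fin (m+3)),
        x ((Equiv.Perm.decomposeFin.symm (p, e)) 0) *
        x ((Equiv.Perm.decomposeFin.symm (p, e)) 1) *
        x ((Equiv.Perm.decomposeFin.symm (p, e)) 2) *
        x ((Equiv.Perm.decomposeFin.symm (p, e)) 3)
        = x p * (x (Equiv.swap 0 p (e 0).succ) * x (Equiv.swap 0 p (e 1).succ)
            * x (Equiv.swap 0 p (e 2).succ)) := by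
      intro e
      simp only [Equiv.Perm.decomposeFin_symm_apply_zero, h1, h2, h3,
        Equiv.Perm.decomposeFin_symm_apply_succ]
      ring
    rw [Finset.sum_congr rfl (fun e _ => step e), ← Finset.mul_sum]
    congr 1
    rw [perm_sum3 m (fun j => x (Equiv.swap 0 p j.succ)),
      swap_sum (m+3) p x, swap_sum (m+3) p (fun i => (x i)^2),
      swap_sum (m+3) p (fun i => (x i)^3)]
  rw [Finset.sum_congr rfl (fun p _ => key p)]
  set s1 := ∑ i, x i
  set s2 := ∑ i, (x i)^2
  set s3 := ∑ i, (x i)^3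
  set C := (Nat.factorial m : ℝ)
  calc ∑ p, x p * (C * ((s1 - x p)^3 - 3*(s1 - x p)*(s2 - (x p)^2) + 2*(s3 - (x p)^3)))
      = ∑ p, (C * (s1^3 - 3*s1*s2 + 2*s3) * x p + C * (-3*s1^2 + 3*s2) * (x p)^2
          + 6*C*s1 * (x p)^3 - 6*C * (x p)^4) :=
        Finset.sum_congr rfl (fun p _ => by ring)
    _ = C * (s1^3 - 3*s1*s2 + 2*s3) * ∑ p, x p + C * (-3*s1^2 + 3*s2) * ∑ p, (x p)^2
          + 6*C*s1 * ∑ p, (x p)^3 - 6*C * ∑ p, (x p)^4 := by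
        rw [Finset.sum_sub_distrib, Finset.sum_add_distrib, Finset.sum_add_distrib,
          ← Finset.mul_sum, ← Finset.mul_sum, ← Finset.mul_sum, ← Finset.mul_sum]
    _ = _ := by ring

theorem statement8 (n : ℕ) (hn : 4 ≤ n) (x : Fin n → ℝ) (B Q : ℝ)
    (hx : ∑ i, x i = 0) (hB : ∑ i, (x i) ^ 2 = B) (hQ : ∑ i, (x i) ^ 4 = Q) :
    ∫ σ, X n x 0 σ * X n x 1 σ * X n x 2 σ * X n x 3 σ ∂(permMeasure n)
      = (3 * B ^ 2 - 6 * Q) / ((n : ℝ) * ((n : ℝ) - 1) * ((n : ℝ) - 2) * ((n : ℝ) - 3)) := by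
  obtain ⟨m, rfl⟩ : ∃ m, n = m + 4 := ⟨n - 4, by omega⟩
  haveI : MeasurableSingletonClass (Equiv.Perm (Fin (m+4))) := ⟨fun _ => trivial⟩
  have hXi : ∀ (i : ℕ) (h : i < m+4) (σ : Equiv.Perm (Fin (m+4))),
      X (m+4) x i σ = x (σ ⟨i, h⟩) := by intro i h σ; simp [X, h]
  have hXf : ∀ σ : Equiv.Perm (Fin (m+4)),
      X (m+4) x 0 σ * X (m+4) x 1 σ * X (m+4) x 2 σ * X (m+4) x 3 σ
        = x (σ 0) * x (σ 1) * x (σ 2) * x (σ 3) := by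
    intro σ
    rw [hXi 0 (by omega), hXi 1 (by omega), hXi 2 (by omega), hXi 3 (by omega)]; rfl
  rw [permMeasure, PMF.integral_eq_sum]
  simp only [PMF.uniformOfFintype_apply, smul_eq_mul, hXf, ENNReal.toReal_inv,
    ENNReal.toReal_natCast, Fintype.card_perm, Fintype.card_fin]
  rw [← Finset.mul_sum, perm_sum4 m x, hx, hB, hQ]
  have h1 : (Nat.factorial (m+4) : ℝ)
      = ((m:ℝ)+4)*((m:ℝ)+3)*((m:ℝ)+2)*((m:ℝ)+1)*(Nat.factorial m : ℝ) := by
    push_cast [Nat.factorial_succ]; ring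
  have hm : (Nat.factorial m : ℝ) ≠ 0 := by
    exact_mod_cast Nat.factorial_ne_zero m
  have hm1 : ((m:ℝ)+1) ≠ 0 := by positivity
  have hm2 : ((m:ℝ)+2) ≠ 0 := by positivity
  have hm3 : ((m:ℝ)+3) ≠ 0 := by positivity
  have hm4 : ((m:ℝ)+4) ≠ 0 := by positivity
  have hD1 : ((m:ℝ)+4)*((m:ℝ)+3)*((m:ℝ)+2)*((m:ℝ)+1)*(Nat.factorial m : ℝ) ≠ 0 :=
    mul_ne_zero (by positivity) hm
  have hD2 : ((m:ℝ)+4)*((m:ℝ)+3)*((m:ℝ)+2)*((m:ℝ)+1) ≠ 0 := by positivity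
  have hden : ((m+4:ℕ):ℝ) * (((m+4:ℕ):ℝ) - 1) * (((m+4:ℕ):ℝ) - 2) * (((m+4:ℕ):ℝ) - 3)
      = ((m:ℝ)+4)*((m:ℝ)+3)*((m:ℝ)+2)*((m:ℝ)+1) := by push_cast; ring
  rw [hden, h1, inv_mul_eq_div, div_eq_div_iff hD1 hD2]
  ring

end
end

section
/- If X_1,X_2,X_3 are the first three samples drawn without replacement from reals x_1,...,x_n (n >= 3) summing to 0, then E[X_1^2 X_2 X_3] = (2Q - B^2)/(n(n-1)(n-2)), where B = sum x_i^2 and Q = sum x_i^4. -/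
open MeasureTheory Finset

noncomputable section

open Equiv Nat in
lemma sum_swap_succ {m : ℕ} (g : Fin (m+1) → ℝ) (p : Fin (m+1)) :
    ∑ i : Fin m, g (Equiv.swap 0 p i.succ) = (∑ j, g j) - g p := by
  have h := Equiv.sum_comp (Equiv.swap 0 p) g
  rw [Fin.sum_univ_succ] at h
  simp only [Equiv.swap_apply_left] at h
  linarith

open Equiv Nat in
lemma perm_sum_one {m : ℕ} (z : Fin (m+1) → ℝ) :
    ∑ σ : Perm (Fin (m+1)), z (σ 0) = (m ! : ℝ) * ∑ j, z j := by
  rw [← Equiv.sum_comp (Equiv.Perm.decomposeFin (n := m)).symm (fun σ => z (σ 0))]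
  simp [Fintype.sum_prod_type, Equiv.Perm.decomposeFin_symm_apply_zero,
    Finset.sum_const, Fintype.card_perm]
  rw [← Finset.mul_sum]

open Equiv Nat in
lemma perm_sum_two {m : ℕ} (z : Fin (m+2) → ℝ) :
    ∑ σ : Perm (Fin (m+2)), z (σ 0) * z (σ 1)
      = (m ! : ℝ) * ((∑ j, z j)^2 - ∑ j, (z j)^2) := by
  rw [← Equiv.sum_comp (Equiv.Perm.decomposeFin (n := m+1)).symm
    (fun σ => z (σ 0) * z (σ 1)), Fintype.sum_prod_type]
  have h1 : ∀ (p : Fin (m+2)) (e : Perm (Fin (m+1))),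
      Equiv.Perm.decomposeFin.symm (p, e) 1 = Equiv.swap 0 p (e 0).succ := by
    intro p e
    rw [← Fin.succ_zero_eq_one, Equiv.Perm.decomposeFin_symm_apply_succ]
  simp only [Equiv.Perm.decomposeFin_symm_apply_zero, h1]
  have h2 : ∀ p : Fin (m+2), ∑ e : Perm (Fin (m+1)), z p * z (Equiv.swap 0 p (e 0).succ)
      = (m ! : ℝ) * (z p * (∑ j, z j)) - (m ! : ℝ) * (z p)^2 := by
    intro p
    rw [← Finset.mul_sum, perm_sum_one (fun i => z (Equiv.swap 0 p i.succ)), sum_swap_succ]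
    ring
  rw [Finset.sum_congr rfl (fun p _ => h2 p), Finset.sum_sub_distrib,
    ← Finset.mul_sum, ← Finset.mul_sum, ← Finset.sum_mul]
  ring

open Equiv Nat in
lemma perm_sum_three {m : ℕ} (w : Fin (m+3) → ℝ) (hS : ∑ j, w j = 0) :
    ∑ σ : Perm (Fin (m+3)), w (σ 0)^2 * w (σ 1) * w (σ 2)
      = (m ! : ℝ) * (2 * (∑ j, (w j)^4) - (∑ j, (w j)^2)^2) := by
  rw [← Equiv.sum_comp (Equiv.Perm.decomposeFin (n := m+2)).symm
    (fun σ => w (σ 0)^2 * w (σ 1) * w (σ 2)), Fintype.sum_prod_type]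
  have h1 : ∀ (p : Fin (m+3)) (e : Perm (Fin (m+2))),
      Equiv.Perm.decomposeFin.symm (p, e) 1 = Equiv.swap 0 p (e 0).succ := fun p e => by
    rw [← Fin.succ_zero_eq_one, Equiv.Perm.decomposeFin_symm_apply_succ]
  have h2 : ∀ (p : Fin (m+3)) (e : Perm (Fin (m+2))),
      Equiv.Perm.decomposeFin.symm (p, e) 2 = Equiv.swap 0 p (e 1).succ := fun p e => by
    rw [← Fin.succ_one_eq_two, Equiv.Perm.decomposeFin_symm_apply_succ]
  simp only [Equiv.Perm.decomposeFin_symm_apply_zero, h1, h2]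
  have h3 : ∀ p : Fin (m+3),
      ∑ e : Perm (Fin (m+2)),
        w p ^2 * w (Equiv.swap 0 p (e 0).succ) * w (Equiv.swap 0 p (e 1).succ)
      = (m ! : ℝ) * (2 * (w p)^4 - (∑ j, (w j)^2) * (w p)^2) := by
    intro p
    have he : ∀ e : Perm (Fin (m+2)),
        w p ^2 * w (Equiv.swap 0 p (e 0).succ) * w (Equiv.swap 0 p (e 1).succ)
        = w p^2 * ((fun i => w (Equiv.swap 0 p i.succ)) (e 0)
            * (fun i => w (Equiv.swap 0 p i.succ)) (e 1)) := fun e => by ring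
    rw [Finset.sum_congr rfl fun e _ => he e, ← Finset.mul_sum,
      perm_sum_two (fun i => w (Equiv.swap 0 p i.succ)), sum_swap_succ, hS,
      sum_swap_succ (fun j => (w j)^2) p]
    ring
  rw [Finset.sum_congr rfl fun p _ => h3 p, ← Finset.mul_sum, Finset.sum_sub_distrib,
    ← Finset.mul_sum, ← Finset.mul_sum]
  ring

theorem statement9 (n : ℕ) (hn : 3 ≤ n) (x : Fin n → ℝ) (B Q : ℝ)
    (hx : ∑ i, x i = 0) (hB : ∑ i, (x i) ^ 2 = B) (hQ : ∑ i, (x i) ^ 4 = Q) :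
    ∫ σ, (X n x 0 σ) ^ 2 * X n x 1 σ * X n x 2 σ ∂(permMeasure n)
      = (2 * Q - B ^ 2) / ((n : ℝ) * ((n : ℝ) - 1) * ((n : ℝ) - 2)) := by
  obtain ⟨m, rfl⟩ : ∃ m, n = m + 3 := ⟨n - 3, by omega⟩
  have e0 : ∀ σ : Equiv.Perm (Fin (m+3)), X (m+3) x 0 σ = x (σ 0) := fun σ => by
    rw [X, dif_pos (by omega : 0 < m+3)]
    congr 1
  have e1 : ∀ σ : Equiv.Perm (Fin (m+3)), X (m+3) x 1 σ = x (σ 1) := fun σ => by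
    rw [X, dif_pos (by omega : 1 < m+3)]
    congr 1
  have e2 : ∀ σ : Equiv.Perm (Fin (m+3)), X (m+3) x 2 σ = x (σ 2) := fun σ => by
    rw [X, dif_pos (by omega : 2 < m+3)]
    congr 1
  rw [permMeasure, PMF.integral_eq_sum]
  simp only [PMF.uniformOfFintype_apply, Fintype.card_perm, Fintype.card_fin,
    smul_eq_mul, ENNReal.toReal_inv, ENNReal.toReal_natCast, e0, e1, e2]
  rw [← Finset.mul_sum, perm_sum_three x hx, hB, hQ]
  have hfac : (((m+3).factorial : ℕ) : ℝ) = ((m+3 : ℕ) : ℝ) * ((m+2 : ℕ) : ℝ)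
      * ((m+1 : ℕ) : ℝ) * ((m.factorial : ℕ) : ℝ) := by
    show (((m+2+1).factorial : ℕ) : ℝ) = _
    rw [Nat.factorial_succ, Nat.factorial_succ, Nat.factorial_succ]
    push_cast
    ring
  rw [hfac]
  have hm : ((m.factorial : ℕ) : ℝ) ≠ 0 := by positivity
  push_cast
  have hd : ((m:ℝ)+3) * (((m:ℝ)+3)-1) * (((m:ℝ)+3)-2) ≠ 0 := by
    have h : ((m:ℝ)+3) * (((m:ℝ)+3)-1) * (((m:ℝ)+3)-2)
        = ((m:ℝ)+3)*((m:ℝ)+2)*((m:ℝ)+1) := by ring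
    rw [h]; positivity
  rw [eq_div_iff hd]
  have h1 : ((m:ℝ)+3) ≠ 0 := by positivity
  have h2 : ((m:ℝ)+2) ≠ 0 := by positivity
  have h3 : ((m:ℝ)+1) ≠ 0 := by positivity
  field_simp
  ring

end
end

section
/- For real numbers x_1,...,x_n with x_1+...+x_n = 0, the average over all n! permutations sigma of max_{1<=k<=n} ( (1/k) sum_{i=1}^k x_{sigma(i)} )^2 is at most (4/n) sum_{i=1}^n x_i^2. -/
open MeasureTheory Finset

noncomputable section

namespace Stmt11Aux

/-- the equivalence between `Fin m` and the subtype of `Fin n` of elements `< m`. -/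
def finEquiv (m n : ℕ) (hmn : m ≤ n) : Fin m ≃ {q : Fin n // (q : ℕ) < m} where
  toFun i := ⟨Fin.castLE hmn i, by simpa using i.isLt⟩
  invFun q := ⟨q.1.1, q.2⟩
  left_inv i := rfl
  right_inv q := rfl

/-- extend a permutation of `Fin m` to `Fin n`, fixing positions `≥ m`. -/
def pext {m n : ℕ} (hmn : m ≤ n) (τ : Equiv.Perm (Fin m)) : Equiv.Perm (Fin n) :=
  τ.extendDomain (finEquiv m n hmn)

lemma pext_apply_lt {m n : ℕ} (hmn : m ≤ n) (τ : Equiv.Perm (Fin m)) (q : Fin n)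
    (h : (q : ℕ) < m) : pext hmn τ q = Fin.castLE hmn (τ ⟨q.1, h⟩) := by
  have := Equiv.Perm.extendDomain_apply_subtype τ (finEquiv m n hmn) (b := q) h
  simpa [pext, finEquiv] using this

lemma pext_apply_ge {m n : ℕ} (hmn : m ≤ n) (τ : Equiv.Perm (Fin m)) (q : Fin n)
    (h : ¬ (q : ℕ) < m) : pext hmn τ q = q :=
  Equiv.Perm.extendDomain_apply_not_subtype τ (finEquiv m n hmn) h

lemma pext_castLE {m n : ℕ} (hmn : m ≤ n) (τ : Equiv.Perm (Fin m)) (i : Fin m) :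
    pext hmn τ (Fin.castLE hmn i) = Fin.castLE hmn (τ i) := by
  have h : ((Fin.castLE hmn i : Fin n) : ℕ) < m := by simpa using i.isLt
  rw [pext_apply_lt hmn τ _ h]
  congr 1

lemma pext_compat {m l n : ℕ} (hmn : m ≤ n) (hml : m ≤ l) (hln : l ≤ n)
    (τ : Equiv.Perm (Fin m)) (q : Fin l) :
    pext hmn τ (Fin.castLE hln q) = Fin.castLE hln (pext hml τ q) := by
  by_cases h : (q : ℕ) < m
  · rw [pext_apply_lt hmn τ _ (by simpa using h), pext_apply_lt hml τ q h]
    ext; simp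
  · rw [pext_apply_ge hmn τ _ (by simpa using h), pext_apply_ge hml τ q h]

lemma sum_shift {n : ℕ} (π : Equiv.Perm (Fin n)) (h : Equiv.Perm (Fin n) → ℝ) :
    ∑ σ : Equiv.Perm (Fin n), h (σ * π) = ∑ σ : Equiv.Perm (Fin n), h σ :=
  Fintype.sum_equiv (Equiv.mulRight π) _ _ (fun _ => rfl)

lemma sum_perm_apply {m : ℕ} (hm : 0 < m) (f : Fin m → ℝ) :
    (m : ℝ) * ∑ τ : Equiv.Perm (Fin m), f (τ ⟨0, hm⟩) =
      (Fintype.card (Equiv.Perm (Fin m)) : ℝ) * ∑ q, f q := by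
  have h1 : ∀ p : Fin m, (∑ τ : Equiv.Perm (Fin m), f (τ p))
      = ∑ τ : Equiv.Perm (Fin m), f (τ ⟨0, hm⟩) := by
    intro p
    exact Fintype.sum_equiv (Equiv.mulRight (Equiv.swap ⟨0, hm⟩ p)) _ _
      (fun τ => by simp [Equiv.Perm.mul_apply])
  have h2 : ∑ p : Fin m, ∑ τ : Equiv.Perm (Fin m), f (τ p)
      = (m : ℝ) * ∑ τ : Equiv.Perm (Fin m), f (τ ⟨0, hm⟩) := by
    simp_rw [h1]
    rw [Finset.sum_const, card_univ, Fintype.card_fin, nsmul_eq_mul]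
  have h3 : ∑ p : Fin m, ∑ τ : Equiv.Perm (Fin m), f (τ p)
      = (Fintype.card (Equiv.Perm (Fin m)) : ℝ) * ∑ q, f q := by
    rw [Finset.sum_comm]
    have : ∀ τ : Equiv.Perm (Fin m), ∑ p : Fin m, f (τ p) = ∑ q, f q :=
      fun τ => Equiv.sum_comp τ f
    simp_rw [this]
    rw [Finset.sum_const, card_univ, nsmul_eq_mul]
  rw [← h2, h3]

variable (n : ℕ) (x : Fin n → ℝ)

lemma S_fin (l : ℕ) (hl : l ≤ n) (σ : Equiv.Perm (Fin n)) :
    S n x l σ = ∑ q : Fin l, x (σ (Fin.castLE hl q)) := by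
  rw [S, ← Fin.sum_univ_eq_sum_range (fun i => X n x i σ) l]
  refine Finset.sum_congr rfl fun q _ => ?_
  rw [X, dif_pos (lt_of_lt_of_le q.isLt hl)]
  rfl

lemma MM_def : True := trivial

def MM (j : ℕ) (σ : Equiv.Perm (Fin n)) : ℝ := S n x (n - j) σ / ((n - j : ℕ) : ℝ)

def CC : ℕ → Equiv.Perm (Fin n) → ℝ
  | 0 => fun σ => |MM n x 0 σ|
  | (j+1) => fun σ => max (|MM n x (j+1) σ|) (CC j σ)

lemma CC_nonneg (j : ℕ) (σ : Equiv.Perm (Fin n)) : 0 ≤ CC n x j σ := by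
  induction j with
  | zero => exact abs_nonneg _
  | succ j ih => exact le_trans ih (le_max_right _ _)

lemma CC_le_succ (j : ℕ) (σ : Equiv.Perm (Fin n)) : CC n x j σ ≤ CC n x (j+1) σ :=
  le_max_right _ _

lemma S_inv {m l : ℕ} (hmn : m ≤ n) (hml : m ≤ l) (hln : l ≤ n)
    (τ : Equiv.Perm (Fin m)) (σ : Equiv.Perm (Fin n)) :
    S n x l (σ * pext hmn τ) = S n x l σ := by
  rw [S_fin n x l hln, S_fin n x l hln]
  have h : ∀ q : Fin l, (σ * pext hmn τ) (Fin.castLE hln q)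
      = σ (Fin.castLE hln (pext hml τ q)) := by
    intro q
    rw [Equiv.Perm.mul_apply, pext_compat hmn hml hln]
  simp_rw [h]
  exact Equiv.sum_comp (pext hml τ) (fun q => x (σ (Fin.castLE hln q)))

lemma CC_inv {m : ℕ} (hmn : m ≤ n) (τ : Equiv.Perm (Fin m)) (σ : Equiv.Perm (Fin n)) :
    ∀ j, m ≤ n - j → CC n x j (σ * pext hmn τ) = CC n x j σ := by
  intro j
  induction j with
  | zero =>
    intro h
    simp only [CC, MM]
    rw [S_inv n x hmn h (Nat.sub_le n 0) τ σ]
  | succ j ih =>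
    intro h
    have hj : m ≤ n - j := le_trans h (Nat.sub_le_sub_left (Nat.le_succ j) n)
    simp only [CC, MM]
    rw [ih hj, S_inv n x hmn h (Nat.sub_le n (j+1)) τ σ]

lemma key {m : ℕ} (hm : 1 ≤ m) (hmn : m ≤ n) (g : Equiv.Perm (Fin n) → ℝ)
    (hg : ∀ σ, 0 ≤ g σ) (hinv : ∀ τ σ, g (σ * pext hmn τ) = g σ) :
    ∑ σ : Equiv.Perm (Fin n), g σ * |S n x m σ / (m : ℝ)|
      ≤ ∑ σ : Equiv.Perm (Fin n), g σ * |x (σ (Fin.castLE hmn ⟨0, hm⟩))| := by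
  set P : ℝ := (Fintype.card (Equiv.Perm (Fin m)) : ℝ) with hP
  have hPpos : 0 < P := by positivity
  have hmR : (0:ℝ) < (m : ℝ) := by exact_mod_cast hm
  have havg : ∀ σ : Equiv.Perm (Fin n),
      ∑ τ : Equiv.Perm (Fin m), x (σ (Fin.castLE hmn (τ ⟨0, hm⟩)))
        = P * (S n x m σ / (m : ℝ)) := by
    intro σ
    have := sum_perm_apply hm (fun q => x (σ (Fin.castLE hmn q)))
    rw [← S_fin n x m hmn σ] at this
    field_simp
    linarith [this]
  refine le_of_mul_le_mul_left ?_ hPpos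
  calc P * ∑ σ : Equiv.Perm (Fin n), g σ * |S n x m σ / (m : ℝ)|
      = ∑ σ : Equiv.Perm (Fin n), g σ * |P * (S n x m σ / (m : ℝ))| := by
        rw [Finset.mul_sum]
        refine Finset.sum_congr rfl fun σ _ => ?_
        rw [abs_mul, abs_of_pos hPpos]; ring
    _ = ∑ σ : Equiv.Perm (Fin n),
          g σ * |∑ τ : Equiv.Perm (Fin m), x (σ (Fin.castLE hmn (τ ⟨0, hm⟩)))| := by
        simp_rw [havg]
    _ ≤ ∑ σ : Equiv.Perm (Fin n),
          g σ * ∑ τ : Equiv.Perm (Fin m), |x (σ (Fin.castLE hmn (τ ⟨0, hm⟩)))| := by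
        refine Finset.sum_le_sum fun σ _ => ?_
        exact mul_le_mul_of_nonneg_left (Finset.abs_sum_le_sum_abs _ _) (hg σ)
    _ = ∑ τ : Equiv.Perm (Fin m), ∑ σ : Equiv.Perm (Fin n),
          g σ * |x (σ (Fin.castLE hmn (τ ⟨0, hm⟩)))| := by
        simp_rw [Finset.mul_sum]; rw [Finset.sum_comm]
    _ = ∑ τ : Equiv.Perm (Fin m), ∑ σ : Equiv.Perm (Fin n),
          g σ * |x (σ (Fin.castLE hmn ⟨0, hm⟩))| := by
        refine Finset.sum_congr rfl fun τ _ => ?_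
        have := sum_shift (pext hmn τ) (fun σ => g σ * |x (σ (Fin.castLE hmn ⟨0, hm⟩))|)
        rw [← this]
        refine Finset.sum_congr rfl fun σ _ => ?_
        rw [hinv τ σ, Equiv.Perm.mul_apply, pext_castLE]
    _ = P * ∑ σ : Equiv.Perm (Fin n), g σ * |x (σ (Fin.castLE hmn ⟨0, hm⟩))| := by
        rw [Finset.sum_const, card_univ, nsmul_eq_mul]

lemma pathwise (σ : Equiv.Perm (Fin n)) (J : ℕ) :
    CC n x J σ ^ 2 ≤ CC n x 0 σ ^ 2
      + 2 * ∑ j ∈ Finset.range J, |MM n x (j+1) σ| * (CC n x (j+1) σ - CC n x j σ) := by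
  induction J with
  | zero => simp
  | succ J ih =>
    rw [Finset.sum_range_succ]
    have hstep : CC n x (J+1) σ ^ 2 - CC n x J σ ^ 2
        ≤ 2 * (|MM n x (J+1) σ| * (CC n x (J+1) σ - CC n x J σ)) := by
      have hC : CC n x (J+1) σ = max (|MM n x (J+1) σ|) (CC n x J σ) := rfl
      rcases le_total (|MM n x (J+1) σ|) (CC n x J σ) with h | h
      · rw [hC, max_eq_right h]; ring_nf; nlinarith [abs_nonneg (MM n x (J+1) σ)]
      · rw [hC, max_eq_left h]
        have h0 := CC_nonneg n x J σ
        nlinarith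
    linarith

lemma CC0_eq_zero (hn : 1 ≤ n) (hx : ∑ i, x i = 0) (σ : Equiv.Perm (Fin n)) :
    CC n x 0 σ = 0 := by
  simp only [CC, MM, Nat.sub_zero]
  have : S n x n σ = 0 := by
    rw [S_fin n x n le_rfl σ]
    have h1 : ∀ q : Fin n, Fin.castLE le_rfl q = q := fun q => rfl
    simp_rw [h1]
    rw [Equiv.sum_comp σ x, hx]
  rw [this]
  simp

lemma sq_max (a b : ℝ) (ha : 0 ≤ a) (hb : 0 ≤ b) : (max a b) ^ 2 = max (a ^ 2) (b ^ 2) := by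
  rcases le_total a b with h | h
  · rw [max_eq_right h, max_eq_right (by nlinarith)]
  · rw [max_eq_left h, max_eq_left (by nlinarith)]

lemma sup_sq_eq (hn : 1 ≤ n) (σ : Equiv.Perm (Fin n)) :
    ∀ j, j ≤ n - 1 → ∀ H : (Finset.Icc (n - j) n).Nonempty,
      (Finset.Icc (n - j) n).sup' H (fun k => (S n x k σ / (k : ℝ)) ^ 2)
        = CC n x j σ ^ 2 := by
  intro j
  induction j with
  | zero =>
    intro _ H
    have he : Finset.Icc (n - 0) n = {n} := by rw [Nat.sub_zero, Finset.Icc_self]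
    rw [Finset.sup'_congr H he (fun k _ => rfl)]
    rw [Finset.sup'_singleton]
    simp only [CC, MM, Nat.sub_zero, sq_abs]
  | succ j ih =>
    intro hj H
    have hj' : j ≤ n - 1 := le_trans (Nat.le_succ j) hj
    have hne : (Finset.Icc (n - j) n).Nonempty := Finset.nonempty_Icc.mpr (Nat.sub_le n j)
    have hins : Finset.Icc (n - (j+1)) n = insert (n - (j+1)) (Finset.Icc (n - j) n) := by
      ext a
      simp only [Finset.mem_Icc, Finset.mem_insert]
      omega
    rw [Finset.sup'_congr H hins (fun k _ => rfl)]
    rw [Finset.sup'_insert hne]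
    rw [ih hj' hne]
    simp only [CC, MM]
    rw [sq_max _ _ (abs_nonneg _) (CC_nonneg n x j σ), sq_abs]

lemma S_filter (k : ℕ) (hk : k ≤ n) (σ : Equiv.Perm (Fin n)) :
    (∑ i ∈ Finset.univ.filter fun i : Fin n => (i : ℕ) < k, x (σ i)) = S n x k σ := by
  rw [S_fin n x k hk σ]
  refine Finset.sum_bij'
    (fun (i : Fin n) (hi : i ∈ Finset.univ.filter fun i : Fin n => (i : ℕ) < k) =>
      (⟨i.1, (Finset.mem_filter.mp hi).2⟩ : Fin k))
    (fun (q : Fin k) _ => Fin.castLE hk q) ?_ ?_ ?_ ?_ ?_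
  · intro a ha; exact Finset.mem_univ _
  · intro q hq; simp
  · intro a ha; rfl
  · intro q hq; rfl
  · intro a ha; rfl

end Stmt11Aux

open Stmt11Aux in
theorem statement11 (n : ℕ) (hn : 1 ≤ n) (x : Fin n → ℝ) (hx : ∑ i, x i = 0) :
    (1 / (Nat.factorial n : ℝ)) * ∑ σ : Equiv.Perm (Fin n),
        (Finset.Icc 1 n).sup' (Finset.nonempty_Icc.mpr hn)
          (fun k => ((1 / (k : ℝ)) *
            ∑ i ∈ Finset.univ.filter fun i : Fin n => (i : ℕ) < k, x (σ i)) ^ 2)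
      ≤ (4 / (n : ℝ)) * ∑ i, (x i) ^ 2 := by
  classical
  have hn0 : 0 < n := hn
  set N := n - 1 with hN
  set z : Fin n := ⟨0, hn0⟩ with hz
  set A : ℝ := ∑ σ : Equiv.Perm (Fin n), CC n x N σ ^ 2 with hA
  set E2 : ℝ := ∑ σ : Equiv.Perm (Fin n), x (σ z) ^ 2 with hE2
  -- Step 1 : LHS sup' equals CC N σ ^ 2
  have hsup : ∀ σ : Equiv.Perm (Fin n),
      (Finset.Icc 1 n).sup' (Finset.nonempty_Icc.mpr hn)
          (fun k => ((1 / (k : ℝ)) *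
            ∑ i ∈ Finset.univ.filter fun i : Fin n => (i : ℕ) < k, x (σ i)) ^ 2)
        = CC n x N σ ^ 2 := by
    intro σ
    have h1 : Finset.Icc 1 n = Finset.Icc (n - N) n := by
      congr 1; omega
    have h2 : ∀ k ∈ Finset.Icc 1 n,
        ((1 / (k : ℝ)) * ∑ i ∈ Finset.univ.filter fun i : Fin n => (i : ℕ) < k, x (σ i)) ^ 2
          = (S n x k σ / (k : ℝ)) ^ 2 := by
      intro k hk
      rw [S_filter n x k (Finset.mem_Icc.mp hk).2 σ]
      ring
    rw [Finset.sup'_congr (Finset.nonempty_Icc.mpr hn) h1 h2]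
    exact sup_sq_eq n x hn σ N le_rfl _
  -- Step 2 : pathwise bound summed over σ, with the conditional-expectation step
  have hCC0 : ∀ σ, CC n x 0 σ = 0 := CC0_eq_zero n x hn hx
  have hstep2 : ∀ j ∈ Finset.range N,
      (∑ σ : Equiv.Perm (Fin n), |MM n x (j+1) σ| * (CC n x (j+1) σ - CC n x j σ))
        ≤ ∑ σ : Equiv.Perm (Fin n), |x (σ z)| * (CC n x (j+1) σ - CC n x j σ) := by
    intro j hj
    have hjN : j < N := Finset.mem_range.mp hj
    have hm : 1 ≤ n - (j+1) := by omega
    have hmn : n - (j+1) ≤ n := Nat.sub_le _ _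
    have hkey := key n x hm hmn (fun σ => CC n x (j+1) σ - CC n x j σ)
      (fun σ => sub_nonneg.mpr (CC_le_succ n x j σ))
      (fun τ σ => by
        show CC n x (j+1) (σ * pext hmn τ) - CC n x j (σ * pext hmn τ)
            = CC n x (j+1) σ - CC n x j σ
        rw [CC_inv n x hmn τ σ (j+1) le_rfl, CC_inv n x hmn τ σ j (by omega)])
    have hcast : Fin.castLE hmn ⟨0, hm⟩ = z := rfl
    rw [hcast] at hkey
    calc (∑ σ : Equiv.Perm (Fin n), |MM n x (j+1) σ| * (CC n x (j+1) σ - CC n x j σ))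
        = ∑ σ : Equiv.Perm (Fin n),
            (CC n x (j+1) σ - CC n x j σ) * |S n x (n - (j+1)) σ / ((n - (j+1) : ℕ) : ℝ)| := by
          refine Finset.sum_congr rfl fun σ _ => ?_
          rw [MM]; ring
      _ ≤ ∑ σ : Equiv.Perm (Fin n), (CC n x (j+1) σ - CC n x j σ) * |x (σ z)| := hkey
      _ = ∑ σ : Equiv.Perm (Fin n), |x (σ z)| * (CC n x (j+1) σ - CC n x j σ) := by
          refine Finset.sum_congr rfl fun σ _ => ?_
          ring
  have hAbound : A ≤ 2 * ∑ σ : Equiv.Perm (Fin n), |x (σ z)| * CC n x N σ := by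
    calc A ≤ ∑ σ : Equiv.Perm (Fin n),
        (2 * ∑ j ∈ Finset.range N, |MM n x (j+1) σ| * (CC n x (j+1) σ - CC n x j σ)) := by
          refine Finset.sum_le_sum fun σ _ => ?_
          have := pathwise n x σ N
          rw [hCC0 σ] at this
          simpa using this
      _ = 2 * ∑ j ∈ Finset.range N, ∑ σ : Equiv.Perm (Fin n),
            |MM n x (j+1) σ| * (CC n x (j+1) σ - CC n x j σ) := by
          rw [← Finset.mul_sum, Finset.sum_comm]
      _ ≤ 2 * ∑ j ∈ Finset.range N, ∑ σ : Equiv.Perm (Fin n),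
            |x (σ z)| * (CC n x (j+1) σ - CC n x j σ) := by
          have := Finset.sum_le_sum hstep2
          linarith
      _ = 2 * ∑ σ : Equiv.Perm (Fin n), |x (σ z)|
            * ∑ j ∈ Finset.range N, (CC n x (j+1) σ - CC n x j σ) := by
          rw [Finset.sum_comm]
          simp_rw [Finset.mul_sum]
      _ = 2 * ∑ σ : Equiv.Perm (Fin n), |x (σ z)| * CC n x N σ := by
          congr 1
          refine Finset.sum_congr rfl fun σ _ => ?_
          rw [Finset.sum_range_sub (f := fun j => CC n x j σ), hCC0 σ, sub_zero]
  -- Step 3 : Cauchy-Schwarz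
  have hCS : (∑ σ : Equiv.Perm (Fin n), |x (σ z)| * CC n x N σ) ^ 2 ≤ E2 * A := by
    have := Finset.sum_mul_sq_le_sq_mul_sq Finset.univ
      (fun σ : Equiv.Perm (Fin n) => |x (σ z)|) (fun σ => CC n x N σ)
    simpa [hE2, hA, sq_abs] using this
  have hApos : 0 ≤ A := Finset.sum_nonneg fun σ _ => sq_nonneg _
  have hE2pos : 0 ≤ E2 := Finset.sum_nonneg fun σ _ => sq_nonneg _
  have hA4 : A ≤ 4 * E2 := by
    set B : ℝ := ∑ σ : Equiv.Perm (Fin n), |x (σ z)| * CC n x N σ with hB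
    have hBpos : 0 ≤ B :=
      Finset.sum_nonneg fun σ _ => mul_nonneg (abs_nonneg _) (CC_nonneg n x N σ)
    nlinarith [sq_nonneg (A - 2 * B)]
  -- Step 4 : E2 = n! * (∑ x^2) / n
  have hE2eq : (n : ℝ) * E2 = (Nat.factorial n : ℝ) * ∑ i, x i ^ 2 := by
    have h1 : ∀ p : Fin n, (∑ σ : Equiv.Perm (Fin n), x (σ p) ^ 2) = E2 := by
      intro p
      rw [hE2]
      have := sum_shift (Equiv.swap z p) (fun σ => x (σ z) ^ 2)
      rw [← this]
      refine Finset.sum_congr rfl fun σ _ => ?_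
      rw [Equiv.Perm.mul_apply, Equiv.swap_apply_left]
    have h2 : ∑ p : Fin n, ∑ σ : Equiv.Perm (Fin n), x (σ p) ^ 2 = (n : ℝ) * E2 := by
      simp_rw [h1]
      rw [Finset.sum_const, card_univ, Fintype.card_fin, nsmul_eq_mul]
    have h3 : ∑ p : Fin n, ∑ σ : Equiv.Perm (Fin n), x (σ p) ^ 2
        = (Nat.factorial n : ℝ) * ∑ i, x i ^ 2 := by
      rw [Finset.sum_comm]
      have : ∀ σ : Equiv.Perm (Fin n), ∑ p : Fin n, x (σ p) ^ 2 = ∑ i, x i ^ 2 :=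
        fun σ => Equiv.sum_comp σ (fun i => x i ^ 2)
      simp_rw [this]
      rw [Finset.sum_const, card_univ, nsmul_eq_mul, Fintype.card_perm, Fintype.card_fin]
    rw [← h2, h3]
  -- Final assembly
  have hfac : (0:ℝ) < (Nat.factorial n : ℝ) := by positivity
  have hnR : (0:ℝ) < (n : ℝ) := by exact_mod_cast hn0
  calc (1 / (Nat.factorial n : ℝ)) * ∑ σ : Equiv.Perm (Fin n),
        (Finset.Icc 1 n).sup' (Finset.nonempty_Icc.mpr hn)
          (fun k => ((1 / (k : ℝ)) *
            ∑ i ∈ Finset.univ.filter fun i : Fin n => (i : ℕ) < k, x (σ i)) ^ 2)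
      = (1 / (Nat.factorial n : ℝ)) * A := by
        rw [hA]
        congr 1
        exact Finset.sum_congr rfl fun σ _ => hsup σ
    _ ≤ (1 / (Nat.factorial n : ℝ)) * (4 * E2) := by
        have h1 : (0:ℝ) ≤ 1 / (Nat.factorial n : ℝ) := by positivity
        exact mul_le_mul_of_nonneg_left hA4 h1
    _ = (4 / (n : ℝ)) * ∑ i, x i ^ 2 := by
        field_simp
        linarith [hE2eq]

end
end

section
/- For real numbers x_1,...,x_n with x_1+...+x_n = 0, the average over all permutations sigma of max_{1<=k<=n} | sum_{i=1}^k x_{sigma(i)} |^2 is at most (41/5) sum_{i=1}^n x_i^2. -/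
open MeasureTheory Finset

noncomputable section

def runMax (y : ℕ → ℝ) : ℕ → ℝ
  | 0 => y 0
  | k+1 => max (runMax y k) (y (k+1))

lemma runMax_nonneg (y : ℕ → ℝ) (hy : ∀ k, 0 ≤ y k) : ∀ k, 0 ≤ runMax y k
  | 0 => hy 0
  | k+1 => le_trans (runMax_nonneg y hy k) (le_max_left _ _)

lemma le_runMax (y : ℕ → ℝ) : ∀ N k, k ≤ N → y k ≤ runMax y N := by
  intro N
  induction N with
  | zero => intro k hk; interval_cases k; exact le_of_eq rfl
  | succ N ih =>
    intro k hk
    rcases Nat.lt_or_ge k (N+1) with h | h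
    · exact le_trans (ih k (by omega)) (le_max_left _ _)
    · have : k = N+1 := by omega
      subst this; exact le_max_right _ _

lemma doob_aux (y : ℕ → ℝ) (hy : ∀ k, 0 ≤ y k) : ∀ N,
    4*(y N)^2 - 4*(runMax y N)*(y N) + 2*(runMax y N)^2 ≤
      4*(y N)^2 - 4*∑ k ∈ range N, runMax y k * (y (k+1) - y k) := by
  intro N
  induction N with
  | zero => simp [runMax]; nlinarith [hy 0]
  | succ N ih =>
    rw [Finset.sum_range_succ]
    show _ ≤ 4*(y (N+1))^2 - 4*(∑ k ∈ range N, runMax y k * (y (k+1) - y k) + runMax y N * (y (N+1) - y N))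
    rcases le_total (y (N+1)) (runMax y N) with h | h
    · rw [show runMax y (N+1) = max (runMax y N) (y (N+1)) from rfl, max_eq_left h]
      nlinarith [ih]
    · rw [show runMax y (N+1) = max (runMax y N) (y (N+1)) from rfl, max_eq_right h]
      nlinarith [ih, sq_nonneg (y (N+1) - runMax y N)]

lemma doob (y : ℕ → ℝ) (hy : ∀ k, 0 ≤ y k) (N : ℕ) :
    (runMax y N)^2 ≤ 4*(y N)^2 - 4*∑ k ∈ range N, runMax y k * (y (k+1) - y k) := by
  have h := doob_aux y hy N
  nlinarith [sq_nonneg (2*(y N) - runMax y N)]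

variable {n : ℕ} {x : Fin n → ℝ}

-- reindexing sum over permutations by right multiplication
lemma swap_sum_s12 (g : Fin n → ℝ) (F : Equiv.Perm (Fin n) → ℝ) (a b : Fin n)
    (hF : ∀ σ, F (σ * Equiv.swap a b) = F σ) :
    ∑ σ : Equiv.Perm (Fin n), F σ * g (σ a) = ∑ σ : Equiv.Perm (Fin n), F σ * g (σ b) := by
  rw [← Equiv.sum_comp (Equiv.mulRight (Equiv.swap a b))
    (fun σ => F σ * g (σ a))]
  apply Finset.sum_congr rfl
  intro σ _
  simp only [Equiv.coe_mulRight]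
  rw [hF]
  congr 2
  simp [Equiv.Perm.mul_apply]

lemma sum_filter_lt (σ : Equiv.Perm (Fin n)) (k : ℕ) (hk : k ≤ n) :
    ∑ i ∈ univ.filter (fun i : Fin n => (i : ℕ) < k), x (σ i) = S n x k σ := by
  rw [S]
  refine Finset.sum_bij' (fun (i : Fin n) (_ : i ∈ univ.filter (fun i : Fin n => (i : ℕ) < k)) => (i : ℕ))
    (fun (j : ℕ) (hj : j ∈ range k) => (⟨j, lt_of_lt_of_le (mem_range.mp hj) hk⟩ : Fin n)) ?_ ?_ ?_ ?_ ?_ <;>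
    first
      | (intro a ha; simp only [mem_filter, mem_univ, true_and, mem_range] at ha ⊢; omega)
      | (intro a ha; rfl)
      | (intro a ha; exact Fin.ext rfl)
      | (intro a ha; rw [X, dif_pos a.isLt])
      | skip

lemma card_filter_ge (k : ℕ) (hk : k ≤ n) :
    (univ.filter (fun a : Fin n => k ≤ (a : ℕ))).card = n - k := by
  have h1 := Finset.card_filter_add_card_filter_not
    (s := (univ : Finset (Fin n))) (p := fun a : Fin n => (a : ℕ) < k)
  simp only [Finset.card_univ, Fintype.card_fin] at h1
  have h2 : (univ.filter (fun a : Fin n => (a : ℕ) < k)).card = k := by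
    refine Eq.trans ?_ (Finset.card_range k)
    apply Finset.card_bij' (fun (i : Fin n) (_ : i ∈ univ.filter (fun i : Fin n => (i : ℕ) < k)) => (i : ℕ))
      (fun (j : ℕ) (hj : j ∈ range k) => (⟨j, lt_of_lt_of_le (mem_range.mp hj) hk⟩ : Fin n)) <;>
      first
        | (intro a ha; rfl)
        | (intro a ha; simp only [mem_filter, mem_univ, true_and, mem_range] at ha ⊢; omega)
  have hcong : univ.filter (fun a : Fin n => ¬ (a : ℕ) < k) = univ.filter (fun a : Fin n => k ≤ (a : ℕ)) := by
    apply Finset.filter_congr; intro a _; simp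
  rw [hcong, h2] at h1
  omega

lemma S_succ (σ : Equiv.Perm (Fin n)) (k : ℕ) (hk : k < n) :
    S n x (k+1) σ = S n x k σ + x (σ ⟨k, hk⟩) := by
  rw [S, Finset.sum_range_succ, X, dif_pos hk]; rfl

lemma S_top (hx : ∑ i, x i = 0) (σ : Equiv.Perm (Fin n)) : S n x n σ = 0 := by
  rw [← sum_filter_lt σ n le_rfl]
  have h : univ.filter (fun i : Fin n => (i : ℕ) < n) = univ := by
    ext i; simp [i.isLt]
  rw [h, Equiv.sum_comp σ x, hx]

lemma sum_ge_eq_neg_S (hx : ∑ i, x i = 0) (σ : Equiv.Perm (Fin n)) (k : ℕ) (hk : k ≤ n) :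
    ∑ a ∈ univ.filter (fun a : Fin n => k ≤ (a : ℕ)), x (σ a) = - S n x k σ := by
  have hsplit : ∑ a ∈ univ.filter (fun a : Fin n => (a : ℕ) < k), x (σ a)
      + ∑ a ∈ univ.filter (fun a : Fin n => ¬ (a : ℕ) < k), x (σ a) = ∑ a : Fin n, x (σ a) :=
    Finset.sum_filter_add_sum_filter_not univ _ _
  have htot : ∑ a : Fin n, x (σ a) = 0 := by rw [Equiv.sum_comp σ x, hx]
  have hcong : univ.filter (fun a : Fin n => ¬ (a : ℕ) < k) = univ.filter (fun a : Fin n => k ≤ (a : ℕ)) := by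
    apply Finset.filter_congr; intro a _; exact not_lt
  rw [sum_filter_lt σ k hk] at hsplit
  rw [← hcong]
  linarith [hsplit, htot]

-- S j depends only on the first k values, j ≤ k
lemma S_congr (σ τ : Equiv.Perm (Fin n)) (k : ℕ)
    (h : ∀ i : Fin n, (i : ℕ) < k → σ i = τ i) (j : ℕ) (hj : j ≤ k) :
    S n x j σ = S n x j τ := by
  rw [S, S]
  apply Finset.sum_congr rfl
  intro i hi
  rw [mem_range] at hi
  rw [X, X]
  split
  · next hin => rw [h ⟨i, hin⟩ (by simpa using (by omega : i < k))]
  · rfl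

lemma cond_step (hx : ∑ i, x i = 0) (k : ℕ) (hk : k < n) (F : Equiv.Perm (Fin n) → ℝ)
    (hF : ∀ σ τ : Equiv.Perm (Fin n), (∀ i : Fin n, (i : ℕ) < k → σ i = τ i) → F σ = F τ) :
    ((n : ℝ) - k) * ∑ σ : Equiv.Perm (Fin n), F σ * x (σ ⟨k, hk⟩) =
      - ∑ σ : Equiv.Perm (Fin n), F σ * S n x k σ := by
  have hconst : ∀ a : Fin n, k ≤ (a : ℕ) →
      ∑ σ : Equiv.Perm (Fin n), F σ * x (σ a) = ∑ σ : Equiv.Perm (Fin n), F σ * x (σ ⟨k, hk⟩) := by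
    intro a ha
    apply swap_sum_s12 x F a ⟨k, hk⟩
    intro σ
    apply hF
    intro i hi
    simp only [Equiv.Perm.mul_apply]
    rw [Equiv.swap_apply_of_ne_of_ne]
    · intro h; subst h; omega
    · intro h; rw [show i = (⟨k, hk⟩ : Fin n) from h] at hi; simp at hi
  have h2 : ∑ a ∈ univ.filter (fun a : Fin n => k ≤ (a : ℕ)),
        (∑ σ : Equiv.Perm (Fin n), F σ * x (σ a))
      = ((n - k : ℕ) : ℝ) * ∑ σ : Equiv.Perm (Fin n), F σ * x (σ ⟨k, hk⟩) := by
    rw [Finset.sum_congr rfl (fun a ha => hconst a (by simpa using (Finset.mem_filter.mp ha).2))]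
    rw [Finset.sum_const, card_filter_ge k (le_of_lt hk), nsmul_eq_mul]
  have h3 : ∑ a ∈ univ.filter (fun a : Fin n => k ≤ (a : ℕ)),
        (∑ σ : Equiv.Perm (Fin n), F σ * x (σ a))
      = ∑ σ : Equiv.Perm (Fin n), F σ * (- S n x k σ) := by
    rw [Finset.sum_comm]
    apply Finset.sum_congr rfl
    intro σ _
    rw [← Finset.mul_sum, sum_ge_eq_neg_S hx σ k (le_of_lt hk)]
  have hcast : ((n - k : ℕ) : ℝ) = (n : ℝ) - k := by
    rw [Nat.cast_sub (le_of_lt hk)]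
  rw [← hcast, ← h2, h3]
  rw [← Finset.sum_neg_distrib]
  apply Finset.sum_congr rfl
  intro σ _; ring

lemma Xsq_sum (k : ℕ) (hk : k < n) :
    (n : ℝ) * ∑ σ : Equiv.Perm (Fin n), (x (σ ⟨k, hk⟩))^2
      = (n.factorial : ℝ) * ∑ i, (x i)^2 := by
  have hconst : ∀ a : Fin n, ∑ σ : Equiv.Perm (Fin n), (x (σ a))^2
      = ∑ σ : Equiv.Perm (Fin n), (x (σ ⟨k, hk⟩))^2 := by
    intro a
    have := swap_sum_s12 (n := n) (fun i => (x i)^2) (fun _ => 1) a ⟨k, hk⟩ (fun σ => rfl)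
    simpa using this
  have h1 : ∑ a : Fin n, ∑ σ : Equiv.Perm (Fin n), (x (σ a))^2
      = (n : ℝ) * ∑ σ : Equiv.Perm (Fin n), (x (σ ⟨k, hk⟩))^2 := by
    rw [Finset.sum_congr rfl (fun a _ => hconst a), Finset.sum_const, Finset.card_univ,
      Fintype.card_fin, nsmul_eq_mul]
  rw [← h1, Finset.sum_comm]
  have h2 : ∀ σ : Equiv.Perm (Fin n), ∑ a : Fin n, (x (σ a))^2 = ∑ i, (x i)^2 :=
    fun σ => Equiv.sum_comp σ (fun i => (x i)^2)
  rw [Finset.sum_congr rfl (fun σ _ => h2 σ), Finset.sum_const, Finset.card_univ,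
    Fintype.card_perm, Fintype.card_fin, nsmul_eq_mul]

lemma V_mart (hx : ∑ i, x i = 0) (k : ℕ) (hk : k < n) :
    ((n : ℝ) - k) * ∑ σ : Equiv.Perm (Fin n), S n x k σ * x (σ ⟨k, hk⟩)
      = - ∑ σ : Equiv.Perm (Fin n), (S n x k σ)^2 := by
  have := cond_step hx k hk (fun σ => S n x k σ)
    (fun σ τ h => S_congr σ τ k h k le_rfl)
  rw [this]
  congr 1
  exact Finset.sum_congr rfl (fun σ _ => by ring)

lemma V_val (hx : ∑ i, x i = 0) (hn : 2 ≤ n) :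
    ∀ k, k ≤ n → ∑ σ : Equiv.Perm (Fin n), (S n x k σ)^2
      = (k : ℝ) * ((n : ℝ) - k) * ((n-2).factorial : ℝ) * ∑ i, (x i)^2 := by
  have hfac : (n.factorial : ℝ) = (n : ℝ) * ((n : ℝ) - 1) * ((n-2).factorial : ℝ) := by
    obtain ⟨m, rfl⟩ : ∃ m, n = m + 2 := ⟨n - 2, by omega⟩
    rw [show m + 2 - 2 = m from rfl, Nat.factorial_succ, Nat.factorial_succ]
    push_cast; ring
  intro k
  induction k with
  | zero => intro _; simp [S]
  | succ k ih =>
    intro hk1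
    have hk : k < n := by omega
    have hrec : ∑ σ : Equiv.Perm (Fin n), (S n x (k+1) σ)^2
        = ∑ σ : Equiv.Perm (Fin n), (S n x k σ)^2
          + 2 * ∑ σ : Equiv.Perm (Fin n), S n x k σ * x (σ ⟨k, hk⟩)
          + ∑ σ : Equiv.Perm (Fin n), (x (σ ⟨k, hk⟩))^2 := by
      have hpt : ∀ σ : Equiv.Perm (Fin n), (S n x (k+1) σ)^2
          = (S n x k σ)^2 + 2*(S n x k σ * x (σ ⟨k, hk⟩)) + (x (σ ⟨k, hk⟩))^2 :=
        fun σ => by rw [S_succ σ k hk]; ring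
      rw [Finset.sum_congr rfl (fun σ _ => hpt σ), Finset.sum_add_distrib,
        Finset.sum_add_distrib, ← Finset.mul_sum]
    have hV := ih (by omega)
    have hM := V_mart hx k hk
    have hX := Xsq_sum (x := x) k hk
    have hnk : ((n : ℝ) - k) ≠ 0 := by
      have : (k : ℝ) < n := by exact_mod_cast hk
      linarith
    have hn0 : (n : ℝ) ≠ 0 := by positivity
    -- solve for the pieces
    have e1 : ∑ σ : Equiv.Perm (Fin n), S n x k σ * x (σ ⟨k, hk⟩)
        = - ((k : ℝ) * ((n : ℝ) - k) * ((n-2).factorial : ℝ) * ∑ i, (x i)^2) / ((n : ℝ) - k) := by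
      rw [← hV]; field_simp; linarith [hM]
    have e2 : ∑ σ : Equiv.Perm (Fin n), (x (σ ⟨k, hk⟩))^2
        = ((n : ℝ) - 1) * ((n-2).factorial : ℝ) * ∑ i, (x i)^2 := by
      rw [hfac] at hX
      apply mul_left_cancel₀ hn0
      rw [hX]; ring
    rw [hrec, hV, e1, e2]
    field_simp
    push_cast
    ring

noncomputable def yy (n : ℕ) (x : Fin n → ℝ) (σ : Equiv.Perm (Fin n)) (k : ℕ) : ℝ :=
  |S n x k σ| / ((n : ℝ) - k)

lemma S_ge_n (hx : ∑ i, x i = 0) (σ : Equiv.Perm (Fin n)) (k : ℕ) (hk : n ≤ k) :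
    S n x k σ = 0 := by
  have : S n x k σ = S n x n σ := by
    rw [S, S]
    apply (Finset.sum_subset (Finset.range_subset_range.mpr hk) _).symm
    intro i _ hi
    rw [mem_range, not_lt] at hi
    rw [X, dif_neg (by omega)]
  rw [this, S_top hx]

lemma yy_nonneg (hx : ∑ i, x i = 0) (σ : Equiv.Perm (Fin n)) (k : ℕ) :
    0 ≤ yy n x σ k := by
  rcases Nat.lt_or_ge k n with h | h
  · have : (0:ℝ) < (n : ℝ) - k := by
      have : (k : ℝ) < n := by exact_mod_cast h
      linarith
    rw [yy]; positivity
  · rw [yy, S_ge_n hx σ k h]; simp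

lemma runMax_congr (y₁ y₂ : ℕ → ℝ) : ∀ k, (∀ j, j ≤ k → y₁ j = y₂ j) → runMax y₁ k = runMax y₂ k
  | 0, h => h 0 le_rfl
  | (k+1), h => by
      rw [show runMax y₁ (k+1) = max (runMax y₁ k) (y₁ (k+1)) from rfl,
        show runMax y₂ (k+1) = max (runMax y₂ k) (y₂ (k+1)) from rfl,
        runMax_congr y₁ y₂ k (fun j hj => h j (by omega)), h (k+1) le_rfl]

lemma drift (hx : ∑ i, x i = 0) (k : ℕ) (hk2 : k + 2 ≤ n) :
    ∑ σ : Equiv.Perm (Fin n), runMax (yy n x σ) k * yy n x σ k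
      ≤ ∑ σ : Equiv.Perm (Fin n), runMax (yy n x σ) k * yy n x σ (k+1) := by
  have hkn : k < n := by omega
  set d : ℝ := (n : ℝ) - k with hd
  have hd2 : (2:ℝ) ≤ d := by
    have : ((k:ℝ) + 2) ≤ (n:ℝ) := by exact_mod_cast hk2
    simp [hd]; linarith
  have hd0 : d ≠ 0 := by linarith
  have hd'0 : (0:ℝ) < d - 1 := by linarith
  set ε : Equiv.Perm (Fin n) → ℝ := fun σ => if 0 ≤ S n x k σ then 1 else -1 with hε
  set F : Equiv.Perm (Fin n) → ℝ := fun σ => runMax (yy n x σ) k * ε σ with hF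
  set m : Equiv.Perm (Fin n) → ℝ := fun σ => runMax (yy n x σ) k with hm
  have hm0 : ∀ σ, 0 ≤ m σ := fun σ => runMax_nonneg _ (yy_nonneg hx σ) k
  have hFinv : ∀ σ τ : Equiv.Perm (Fin n), (∀ i : Fin n, (i : ℕ) < k → σ i = τ i) → F σ = F τ := by
    intro σ τ h
    have hS : ∀ j, j ≤ k → S n x j σ = S n x j τ := fun j hj => S_congr σ τ k h j hj
    have hyy : ∀ j, j ≤ k → yy n x σ j = yy n x τ j := by
      intro j hj; rw [yy, yy, hS j hj]
    simp only [hF, hε, hS k le_rfl, runMax_congr _ _ k hyy]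
  set A : ℝ := ∑ σ : Equiv.Perm (Fin n), m σ * |S n x k σ| with hA
  have h2 : ∑ σ : Equiv.Perm (Fin n), F σ * S n x k σ = A := by
    apply Finset.sum_congr rfl
    intro σ _
    simp only [hF, hε]
    rcases le_or_gt 0 (S n x k σ) with h | h
    · rw [if_pos h, abs_of_nonneg h]; ring
    · rw [if_neg (not_le.mpr h), abs_of_neg h]; ring
  have h3 : d * ∑ σ : Equiv.Perm (Fin n), F σ * x (σ ⟨k, hkn⟩) = -A := by
    rw [cond_step hx k hkn F hFinv, h2]
  have h4 : ∑ σ : Equiv.Perm (Fin n), F σ * S n x (k+1) σ = A * (d - 1) / d := by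
    have expand : ∀ σ : Equiv.Perm (Fin n),
        F σ * S n x (k+1) σ = F σ * S n x k σ + F σ * x (σ ⟨k, hkn⟩) := by
      intro σ; rw [S_succ σ k hkn]; ring
    rw [Finset.sum_congr rfl (fun σ _ => expand σ), Finset.sum_add_distrib, h2]
    have : ∑ σ : Equiv.Perm (Fin n), F σ * x (σ ⟨k, hkn⟩) = -A / d := by
      field_simp; linarith [h3]
    rw [this]; field_simp; ring
  have h5 : A * (d - 1) / d / (d - 1) ≤ ∑ σ : Equiv.Perm (Fin n), m σ * yy n x σ (k+1) := by
    rw [div_le_iff₀ hd'0] at *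
    have hpt : ∀ σ : Equiv.Perm (Fin n),
        F σ * S n x (k+1) σ / (d-1) ≤ m σ * yy n x σ (k+1) := by
      intro σ
      have hle : F σ * S n x (k+1) σ ≤ m σ * |S n x (k+1) σ| := by
        simp only [hF, hε]
        rcases le_or_gt 0 (S n x (k+1) σ) with h | h
        · rcases le_or_gt 0 (S n x k σ) with h' | h'
          · rw [if_pos h', abs_of_nonneg h]; nlinarith [hm0 σ]
          · rw [if_neg (not_le.mpr h'), abs_of_nonneg h]; nlinarith [hm0 σ]
        · rcases le_or_gt 0 (S n x k σ) with h' | h'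
          · rw [if_pos h', abs_of_neg h]; nlinarith [hm0 σ]
          · rw [if_neg (not_le.mpr h'), abs_of_neg h]; nlinarith [hm0 σ]
      have hyy : yy n x σ (k+1) = |S n x (k+1) σ| / (d - 1) := by
        rw [yy]; push_cast; rw [hd]; ring_nf
      rw [hyy, mul_div_assoc']
      exact (div_le_div_iff_of_pos_right hd'0).mpr hle
    calc A * (d-1) / d = ∑ σ : Equiv.Perm (Fin n), F σ * S n x (k+1) σ := h4.symm
      _ = ∑ σ : Equiv.Perm (Fin n), (F σ * S n x (k+1) σ / (d-1)) * (d-1) := by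
            apply Finset.sum_congr rfl; intro σ _; field_simp
      _ = (∑ σ : Equiv.Perm (Fin n), F σ * S n x (k+1) σ / (d-1)) * (d-1) := by
            rw [Finset.sum_mul]
      _ ≤ (∑ σ : Equiv.Perm (Fin n), m σ * yy n x σ (k+1)) * (d-1) := by
            apply mul_le_mul_of_nonneg_right _ (le_of_lt hd'0)
            exact Finset.sum_le_sum (fun σ _ => hpt σ)
  have h6 : ∑ σ : Equiv.Perm (Fin n), m σ * yy n x σ k = A / d := by
    rw [hA, Finset.sum_div]
    apply Finset.sum_congr rfl
    intro σ _
    rw [yy, mul_div_assoc']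
  rw [show (∑ σ : Equiv.Perm (Fin n), runMax (yy n x σ) k * yy n x σ k) = A / d from h6]
  have : A * (d - 1) / d / (d - 1) = A / d := by field_simp
  rw [this] at h5
  exact h5

lemma doobSum (hx : ∑ i, x i = 0) (hn : 2 ≤ n) (N : ℕ) (hN : N ≤ n - 1) :
    ∑ σ : Equiv.Perm (Fin n), (runMax (yy n x σ) N)^2
      ≤ 4 * ((N:ℝ) * ((n:ℝ)-N) * ((n-2).factorial : ℝ) * ∑ i, (x i)^2) / ((n:ℝ)-N)^2 := by
  have hNn : (N:ℝ) < (n:ℝ) := by exact_mod_cast (by omega : N < n)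
  have hdpos : (0:ℝ) < (n:ℝ) - N := by linarith
  have h1 : ∀ σ : Equiv.Perm (Fin n), (runMax (yy n x σ) N)^2
      ≤ 4*(yy n x σ N)^2 - 4*∑ k ∈ range N, runMax (yy n x σ) k * (yy n x σ (k+1) - yy n x σ k) :=
    fun σ => doob (yy n x σ) (yy_nonneg hx σ) N
  have h2 : ∑ σ : Equiv.Perm (Fin n), (runMax (yy n x σ) N)^2
      ≤ 4*∑ σ : Equiv.Perm (Fin n), (yy n x σ N)^2
        - 4*∑ σ : Equiv.Perm (Fin n), ∑ k ∈ range N, runMax (yy n x σ) k * (yy n x σ (k+1) - yy n x σ k) := by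
    rw [Finset.mul_sum, Finset.mul_sum, ← Finset.sum_sub_distrib]
    exact Finset.sum_le_sum (fun σ _ => h1 σ)
  have h3 : 0 ≤ ∑ σ : Equiv.Perm (Fin n), ∑ k ∈ range N, runMax (yy n x σ) k * (yy n x σ (k+1) - yy n x σ k) := by
    rw [Finset.sum_comm]
    apply Finset.sum_nonneg
    intro k hk
    rw [mem_range] at hk
    have hd := drift hx k (by omega)
    have : ∀ σ : Equiv.Perm (Fin n), runMax (yy n x σ) k * (yy n x σ (k+1) - yy n x σ k)
        = runMax (yy n x σ) k * yy n x σ (k+1) - runMax (yy n x σ) k * yy n x σ k :=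
      fun σ => by ring
    rw [Finset.sum_congr rfl (fun σ _ => this σ), Finset.sum_sub_distrib]
    linarith [hd]
  have h4 : ∑ σ : Equiv.Perm (Fin n), (yy n x σ N)^2
      = ((N:ℝ) * ((n:ℝ)-N) * ((n-2).factorial : ℝ) * ∑ i, (x i)^2) / ((n:ℝ)-N)^2 := by
    have : ∀ σ : Equiv.Perm (Fin n), (yy n x σ N)^2 = (S n x N σ)^2 / ((n:ℝ)-N)^2 := by
      intro σ; rw [yy, div_pow, sq_abs]
    rw [Finset.sum_congr rfl (fun σ _ => this σ), ← Finset.sum_div,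
      V_val hx hn N (by omega)]
  rw [h4] at h2
  rw [mul_div_assoc]
  linarith [h2, h3]

lemma half (hx : ∑ i, x i = 0) (hn : 2 ≤ n) (N : ℕ) (hN1 : 1 ≤ N) (hN : N ≤ n - 1)
    (H : (Finset.Icc 1 N).Nonempty) :
    ∑ σ : Equiv.Perm (Fin n), (Finset.Icc 1 N).sup' H (fun k => |S n x k σ|^2)
      ≤ 4 * ((n:ℝ)-1)^2 * (N:ℝ) * ((n-2).factorial : ℝ) * (∑ i, (x i)^2) / ((n:ℝ)-N) := by
  have hNn : (N:ℝ) < (n:ℝ) := by exact_mod_cast (by omega : N < n)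
  have hdpos : (0:ℝ) < (n:ℝ) - N := by linarith
  have hsup : ∀ σ : Equiv.Perm (Fin n),
      (Finset.Icc 1 N).sup' H (fun k => |S n x k σ|^2) ≤ ((n:ℝ)-1)^2 * (runMax (yy n x σ) N)^2 := by
    intro σ
    apply Finset.sup'_le
    intro k hk
    rw [Finset.mem_Icc] at hk
    have hk1 : 1 ≤ k := hk.1
    have hkN : k ≤ N := hk.2
    have hkd : (0:ℝ) < (n:ℝ) - k := by
      have : (k:ℝ) ≤ (N:ℝ) := by exact_mod_cast hkN
      linarith
    have hyk : |S n x k σ| = ((n:ℝ) - k) * yy n x σ k := by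
      rw [yy]; field_simp
    have hm : yy n x σ k ≤ runMax (yy n x σ) N := le_runMax _ N k hkN
    have hy0 : 0 ≤ yy n x σ k := yy_nonneg hx σ k
    have hnk : (n:ℝ) - k ≤ (n:ℝ) - 1 := by
      have : (1:ℝ) ≤ (k:ℝ) := by exact_mod_cast hk1
      linarith
    have habs : |S n x k σ| ≤ ((n:ℝ)-1) * runMax (yy n x σ) N := by
      rw [hyk]
      apply mul_le_mul hnk hm hy0 (by linarith)
    calc |S n x k σ|^2 ≤ (((n:ℝ)-1) * runMax (yy n x σ) N)^2 := by
          apply sq_le_sq' _ habs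
          have := abs_nonneg (S n x k σ)
          linarith
      _ = ((n:ℝ)-1)^2 * (runMax (yy n x σ) N)^2 := by ring
  calc ∑ σ : Equiv.Perm (Fin n), (Finset.Icc 1 N).sup' H (fun k => |S n x k σ|^2)
      ≤ ∑ σ : Equiv.Perm (Fin n), ((n:ℝ)-1)^2 * (runMax (yy n x σ) N)^2 :=
        Finset.sum_le_sum (fun σ _ => hsup σ)
    _ = ((n:ℝ)-1)^2 * ∑ σ : Equiv.Perm (Fin n), (runMax (yy n x σ) N)^2 := by
        rw [Finset.mul_sum]
    _ ≤ ((n:ℝ)-1)^2 * (4 * ((N:ℝ) * ((n:ℝ)-N) * ((n-2).factorial : ℝ) * ∑ i, (x i)^2) / ((n:ℝ)-N)^2) := by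
        apply mul_le_mul_of_nonneg_left (doobSum hx hn N hN) (by positivity)
    _ = 4 * ((n:ℝ)-1)^2 * (N:ℝ) * ((n-2).factorial : ℝ) * (∑ i, (x i)^2) / ((n:ℝ)-N) := by
        field_simp

lemma S_rev (hx : ∑ i, x i = 0) (σ : Equiv.Perm (Fin n)) (j : ℕ) (hj : j ≤ n) :
    S n x j (σ * (Fin.revPerm : Equiv.Perm (Fin n))) = - S n x (n - j) σ := by
  rw [← sum_ge_eq_neg_S hx σ (n - j) (by omega), S]
  refine Finset.sum_bij'
    (fun (i : ℕ) (hi : i ∈ range j) => Fin.rev (⟨i, by have := mem_range.mp hi; omega⟩ : Fin n))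
    (fun (a : Fin n) (_ : a ∈ univ.filter (fun a : Fin n => n - j ≤ (a : ℕ))) => n - 1 - (a : ℕ))
    ?_ ?_ ?_ ?_ ?_
  · intro i hi
    have hij := mem_range.mp hi
    simp only [mem_filter, mem_univ, true_and, Fin.val_rev]
    omega
  · intro a ha
    have h1 := (mem_filter.mp ha).2
    have h2 := a.isLt
    rw [mem_range]
    show n - 1 - (a : ℕ) < j
    omega
  · intro i hi
    have hij := mem_range.mp hi
    simp only [Fin.val_rev]
    omega
  · intro a ha
    apply Fin.ext
    simp only [Fin.val_rev]
    have := a.isLt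
    omega
  · intro i hi
    have hij := mem_range.mp hi
    rw [X, dif_pos (by omega : i < n)]
    congr 1

lemma arith_real (n N : ℕ) (hn : 2 ≤ n) (hN : N = (n+1)/2) :
    20*((n:ℝ)-1)*((N:ℝ)^2 + ((n:ℝ)-(N:ℝ))^2) ≤ 41*(n:ℝ)*(N:ℝ)*((n:ℝ)-(N:ℝ)) := by
  rcases Nat.even_or_odd n with ⟨m, hm⟩ | ⟨m, hm⟩
  · have hm1 : (1:ℝ) ≤ (m:ℝ) := by exact_mod_cast (by omega : 1 ≤ m)
    have h1 : (n:ℝ) = 2*(m:ℝ) := by rw [hm]; push_cast; ring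
    have h2 : (N:ℝ) = (m:ℝ) := by rw [hN, hm, show (m+m+1)/2 = m by omega]
    rw [h1, h2]
    nlinarith [hm1]
  · have hm1 : (1:ℝ) ≤ (m:ℝ) := by exact_mod_cast (by omega : 1 ≤ m)
    have h1 : (n:ℝ) = 2*(m:ℝ)+1 := by rw [hm]; push_cast; ring
    have h2 : (N:ℝ) = (m:ℝ)+1 := by
      rw [hN, hm, show (2*m+1+1)/2 = m+1 by omega]; push_cast; ring
    rw [h1, h2]
    nlinarith [hm1]

lemma fact_eq (hn : 2 ≤ n) : ((n.factorial : ℝ)) = (n : ℝ) * ((n : ℝ) - 1) * ((n-2).factorial : ℝ) := by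
  obtain ⟨m, rfl⟩ : ∃ m, n = m + 2 := ⟨n - 2, by omega⟩
  rw [show m + 2 - 2 = m from rfl, Nat.factorial_succ, Nat.factorial_succ]
  push_cast; ring


theorem statement12 (n : ℕ) (hn : 1 ≤ n) (x : Fin n → ℝ) (hx : ∑ i, x i = 0) :
    (1 / (Nat.factorial n : ℝ)) * ∑ σ : Equiv.Perm (Fin n),
        (Finset.Icc 1 n).sup' (Finset.nonempty_Icc.mpr hn)
          (fun k => |∑ i ∈ Finset.univ.filter fun i : Fin n => (i : ℕ) < k, x (σ i)| ^ 2)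
      ≤ (41 / 5) * ∑ i, (x i) ^ 2 := by
  rcases Nat.lt_or_ge n 2 with hn2 | hn2
  · -- n = 1 case
    have h1 : n = 1 := by omega
    subst h1
    have hx0 : ∀ i : Fin 1, x i = 0 := by
      intro i
      have h0 : x 0 = 0 := by simpa using hx
      rw [show i = 0 from Subsingleton.elim i 0, h0]
    have hsup : ∀ σ : Equiv.Perm (Fin 1),
        (Finset.Icc 1 1).sup' (Finset.nonempty_Icc.mpr hn)
          (fun k => |∑ i ∈ Finset.univ.filter fun i : Fin 1 => (i : ℕ) < k, x (σ i)| ^ 2) ≤ 0 := by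
      intro σ
      apply Finset.sup'_le
      intro k _
      rw [Finset.sum_eq_zero (fun i _ => hx0 (σ i))]
      simp
    have hRHS : ∑ i : Fin 1, (x i)^2 = 0 :=
      Finset.sum_eq_zero (fun i _ => by rw [hx0 i]; ring)
    have hS : ∑ σ : Equiv.Perm (Fin 1),
        (Finset.Icc 1 1).sup' (Finset.nonempty_Icc.mpr hn)
          (fun k => |∑ i ∈ Finset.univ.filter fun i : Fin 1 => (i : ℕ) < k, x (σ i)| ^ 2) ≤ 0 :=
      Finset.sum_nonpos (fun σ _ => hsup σ)
    rw [hRHS]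
    have hfp : (0:ℝ) < ((Nat.factorial 1 : ℕ) : ℝ) := by norm_num [Nat.factorial]
    nlinarith [hS, hfp, mul_nonneg (le_of_lt (by positivity : (0:ℝ) < 1 / ((Nat.factorial 1 : ℕ) : ℝ))) (neg_nonneg.mpr hS)]
  · -- main case
    set Q := ∑ i, (x i)^2 with hQdef
    have hQ0 : 0 ≤ Q := Finset.sum_nonneg (fun i _ => sq_nonneg _)
    set N := (n+1)/2 with hNdef
    have hN1 : 1 ≤ N := by omega
    have hNle : N ≤ n - 1 := by omega
    have hb1 : 1 ≤ n - N := by omega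
    have hble : n - N ≤ n - 1 := by omega
    have H1 : (Finset.Icc 1 N).Nonempty := Finset.nonempty_Icc.mpr hN1
    have H2 : (Finset.Icc 1 (n-N)).Nonempty := Finset.nonempty_Icc.mpr hb1
    set G1 : Equiv.Perm (Fin n) → ℝ :=
      fun σ => (Finset.Icc 1 N).sup' H1 (fun k => |S n x k σ|^2) with hG1def
    set G2 : Equiv.Perm (Fin n) → ℝ :=
      fun σ => (Finset.Icc 1 (n-N)).sup' H2 (fun k => |S n x k σ|^2) with hG2def
    have hG1n : ∀ σ, 0 ≤ G1 σ := by
      intro σ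
      have h := Finset.le_sup' (fun k => |S n x k σ|^2)
        (Finset.mem_Icc.mpr ⟨le_rfl, hN1⟩ : 1 ∈ Finset.Icc 1 N)
      exact le_trans (sq_nonneg (|S n x 1 σ|)) h
    have hG2n : ∀ σ, 0 ≤ G2 σ := by
      intro σ
      have h := Finset.le_sup' (fun k => |S n x k σ|^2)
        (Finset.mem_Icc.mpr ⟨le_rfl, hb1⟩ : 1 ∈ Finset.Icc 1 (n-N))
      exact le_trans (sq_nonneg (|S n x 1 σ|)) h
    have hpt : ∀ σ : Equiv.Perm (Fin n),
        (Finset.Icc 1 n).sup' (Finset.nonempty_Icc.mpr hn)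
          (fun k => |∑ i ∈ Finset.univ.filter fun i : Fin n => (i : ℕ) < k, x (σ i)| ^ 2)
        ≤ G1 σ + G2 (σ * Fin.revPerm) := by
      intro σ
      apply Finset.sup'_le
      intro k hk
      rw [Finset.mem_Icc] at hk
      rw [sum_filter_lt σ k hk.2]
      by_cases hkN : k ≤ N
      · have := Finset.le_sup' (fun k => |S n x k σ|^2) (Finset.mem_Icc.mpr ⟨hk.1, hkN⟩)
        have h2 := hG2n (σ * Fin.revPerm)
        linarith [this]
      · push_neg at hkN
        by_cases hkn : k = n
        · subst hkn
          rw [S_top hx σ]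
          simp only [abs_zero]
          nlinarith [hG1n σ, hG2n (σ * Fin.revPerm)]
        · have hkn' : k < n := by omega
          have hrev := S_rev (x := x) hx σ (n - k) (by omega)
          rw [show n - (n - k) = k by omega] at hrev
          have habs : |S n x k σ|^2 = |S n x (n-k) (σ * Fin.revPerm)|^2 := by
            rw [hrev, abs_neg]
          rw [habs]
          have hmem : n - k ∈ Finset.Icc 1 (n - N) := Finset.mem_Icc.mpr ⟨by omega, by omega⟩
          have := Finset.le_sup' (fun k => |S n x k (σ * Fin.revPerm)|^2) hmem
          have h1 := hG1n σ
          linarith [this]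
    have hsum : ∑ σ : Equiv.Perm (Fin n),
        (Finset.Icc 1 n).sup' (Finset.nonempty_Icc.mpr hn)
          (fun k => |∑ i ∈ Finset.univ.filter fun i : Fin n => (i : ℕ) < k, x (σ i)| ^ 2)
        ≤ ∑ σ : Equiv.Perm (Fin n), G1 σ + ∑ σ : Equiv.Perm (Fin n), G2 σ := by
      calc _ ≤ ∑ σ : Equiv.Perm (Fin n), (G1 σ + G2 (σ * Fin.revPerm)) :=
            Finset.sum_le_sum (fun σ _ => hpt σ)
        _ = ∑ σ : Equiv.Perm (Fin n), G1 σ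
              + ∑ σ : Equiv.Perm (Fin n), G2 (σ * Fin.revPerm) := Finset.sum_add_distrib
        _ = _ := by
            congr 1
            exact Equiv.sum_comp (Equiv.mulRight (Fin.revPerm : Equiv.Perm (Fin n))) G2
    have hhalf1 := half hx hn2 N hN1 hNle H1
    have hhalf2 := half hx hn2 (n-N) hb1 hble H2
    have hcast : ((n-N : ℕ) : ℝ) = (n:ℝ) - (N:ℝ) := by
      rw [Nat.cast_sub (by omega)]
    rw [hcast, show ((n:ℝ) - ((n:ℝ) - (N:ℝ))) = (N:ℝ) from by ring] at hhalf2
    set a : ℝ := (N:ℝ) with hadef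
    set b : ℝ := (n:ℝ) - (N:ℝ) with hbdef
    set c : ℝ := ((n-2).factorial : ℝ) with hcdef
    have hc0 : (0:ℝ) < c := by
      rw [hcdef]; exact_mod_cast Nat.factorial_pos _
    have ha0 : (0:ℝ) < a := by
      rw [hadef]; exact_mod_cast (by omega : 0 < N)
    have hNn : (N:ℝ) < (n:ℝ) := by exact_mod_cast (by omega : N < n)
    have hb0 : (0:ℝ) < b := by rw [hbdef]; linarith
    have hn1R : (1:ℝ) ≤ (n:ℝ) - 1 := by
      have : (2:ℝ) ≤ (n:ℝ) := by exact_mod_cast hn2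
      linarith
    have key := arith_real n N hn2 hNdef
    rw [← hbdef, ← hadef] at key
    have hfac : ((n.factorial : ℝ)) = (n:ℝ) * ((n:ℝ)-1) * c := fact_eq hn2
    have hfp : (0:ℝ) < (n.factorial : ℝ) := by exact_mod_cast Nat.factorial_pos n
    rw [← hQdef] at hhalf1 hhalf2
    clear_value Q a b c
    have hXD : 0 ≤ (((n:ℝ)-1)*c*Q) * (41*(n:ℝ)*a*b - 20*((n:ℝ)-1)*(a^2+b^2)) := by
      apply mul_nonneg
      · apply mul_nonneg (mul_nonneg (by linarith) (le_of_lt hc0)) hQ0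
      · linarith [key]
    have hBB : 4 * ((n:ℝ)-1)^2 * a * c * Q / b + 4 * ((n:ℝ)-1)^2 * b * c * Q / a
        ≤ (n.factorial : ℝ) * (41/5 * Q) := by
      rw [hfac, div_add_div _ _ (ne_of_gt hb0) (ne_of_gt ha0), div_le_iff₀ (by positivity)]
      nlinarith [hXD]
    have hfinal : ∑ σ : Equiv.Perm (Fin n),
        (Finset.Icc 1 n).sup' (Finset.nonempty_Icc.mpr hn)
          (fun k => |∑ i ∈ Finset.univ.filter fun i : Fin n => (i : ℕ) < k, x (σ i)| ^ 2)
        ≤ (n.factorial : ℝ) * (41/5 * Q) := by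
      calc _ ≤ ∑ σ : Equiv.Perm (Fin n), G1 σ + ∑ σ : Equiv.Perm (Fin n), G2 σ := hsum
        _ ≤ 4 * ((n:ℝ)-1)^2 * a * c * Q / b + 4 * ((n:ℝ)-1)^2 * b * c * Q / a := by
            apply add_le_add
            · exact hhalf1
            · exact hhalf2
        _ ≤ _ := hBB
    rw [one_div, inv_mul_le_iff₀ hfp]
    calc _ ≤ (n.factorial : ℝ) * (41/5 * Q) := hfinal
      _ = (n.factorial : ℝ) * (41/5 * Q) := rfl

end
end

section
/- For real numbers x_1,...,x_n (n >= 2) with x_1+...+x_n = 0, the average over all permutations sigma of max_{2<=k<=n} | ( (sum_{i=1}^k x_{sigma(i)})^2 - ((n-k)/(n-1)) sum_{i=1}^k x_{sigma(i)}^2 ) / (k(k-1)) |^2 is at most (4/(n-1)^2) [ (sum_{i=1}^n x_i^2)^2 - sum_{i=1}^n x_i^4 ]. -/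
open MeasureTheory Finset

noncomputable section

namespace S13

def pos (n k : ℕ) : Finset (Fin n) := Finset.univ.filter (fun i => (i:ℕ) < k)

lemma mem_pos {n k : ℕ} {i : Fin n} : i ∈ pos n k ↔ (i:ℕ) < k := by
  simp [pos]

lemma card_pos {n k : ℕ} (hk : k ≤ n) : (pos n k).card = k := by
  have : (pos n k).card = (Finset.range k).card := by
    apply Finset.card_bij' (fun (i : Fin n) _ => (i:ℕ))
      (fun m hm => (⟨m, lt_of_lt_of_le (Finset.mem_range.mp hm) hk⟩ : Fin n))
    all_goals intro a ha
    all_goals first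
      | rfl
      | exact mem_pos.mpr (Finset.mem_range.mp ha)
      | exact Finset.mem_range.mpr (mem_pos.mp ha)
  rw [this, Finset.card_range]

lemma pos_n {n : ℕ} : pos n n = Finset.univ := by
  ext i; simp [mem_pos, i.isLt]

lemma pos_two {n : ℕ} (hn : 2 ≤ n) :
    pos n 2 = {(⟨0, by omega⟩ : Fin n), ⟨1, by omega⟩} := by
  ext i
  simp only [mem_pos, Finset.mem_insert, Finset.mem_singleton]
  constructor
  · intro h
    have h' : (i:ℕ) = 0 ∨ (i:ℕ) = 1 := by omega
    rcases h' with h0 | h1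
    · left; exact Fin.ext h0
    · right; exact Fin.ext h1
  · rintro (rfl | rfl) <;> simp

/-- swap sum lemma : L4 -/
lemma sum_pos_swap {n j : ℕ} (hj1 : 1 ≤ j) (hjn : j ≤ n) {t : Fin n} (ht : t ∈ pos n j)
    (g : Fin n → ℝ) :
    ∑ i ∈ pos n (j-1), g (Equiv.swap t ⟨j-1, by omega⟩ i)
      = (∑ i ∈ pos n j, g i) - g t := by
  have hw : ((⟨j-1, by omega⟩ : Fin n) : ℕ) = j - 1 := rfl
  have htj : (t:ℕ) < j := mem_pos.mp ht
  rw [← Finset.sum_erase_eq_sub ht]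
  apply Finset.sum_nbij' (fun i => Equiv.swap t ⟨j-1, by omega⟩ i)
    (fun p => Equiv.swap t ⟨j-1, by omega⟩ p)
  · intro a ha
    have haj : (a:ℕ) < j - 1 := mem_pos.mp ha
    by_cases hat : a = t
    · subst hat
      rw [Equiv.swap_apply_left]
      refine Finset.mem_erase.mpr ⟨?_, mem_pos.mpr (by omega)⟩
      intro hwt; apply absurd (congrArg Fin.val hwt); simp [hw]; omega
    · have haw : a ≠ ⟨j-1, by omega⟩ := by
        intro h; apply absurd (congrArg Fin.val h); simp [hw]; omega
      rw [Equiv.swap_apply_of_ne_of_ne hat haw]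
      exact Finset.mem_erase.mpr ⟨hat, mem_pos.mpr (by omega)⟩
  · intro p hp
    obtain ⟨hpt, hpj⟩ := Finset.mem_erase.mp hp
    have hpj' : (p:ℕ) < j := mem_pos.mp hpj
    by_cases hpw : p = ⟨j-1, by omega⟩
    · rw [hpw, Equiv.swap_apply_right]
      refine mem_pos.mpr ?_
      have : t ≠ (⟨j-1, by omega⟩ : Fin n) := fun h => hpt (hpw.trans h.symm)
      have : (t:ℕ) ≠ j - 1 := fun h => this (Fin.ext h)
      omega
    · rw [Equiv.swap_apply_of_ne_of_ne hpt hpw]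
      have : (p:ℕ) ≠ j - 1 := fun h => hpw (Fin.ext h)
      exact mem_pos.mpr (by omega)
  · intro a _; simp
  · intro p _; simp
  · intro a _; rfl

/-- invariance sum lemma : L5 -/
lemma sum_pos_invariant {n j m : ℕ} (hjm : j ≤ m) (π : Equiv.Perm (Fin n))
    (hπ : ∀ i : Fin n, j ≤ (i:ℕ) → π i = i) (g : Fin n → ℝ) :
    ∑ i ∈ pos n m, g (π i) = ∑ i ∈ pos n m, g i := by
  apply Finset.sum_equiv π
  · intro i
    simp only [mem_pos]
    constructor
    · intro him
      by_cases hij : j ≤ (i:ℕ)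
      · rw [hπ i hij]; exact him
      · push_neg at hij
        by_contra hcon
        push_neg at hcon
        have : j ≤ ((π i : Fin n) : ℕ) := le_trans hjm hcon
        have := hπ (π i) this
        have : π i = i := π.injective this
        omega
    · intro hπim
      by_contra hcon
      push_neg at hcon
      have : j ≤ (i:ℕ) := le_trans hjm hcon
      rw [hπ i this] at hπim
      omega
  · intro i _; rfl

end S13

namespace S13B
open S13

def PP (n : ℕ) (x : Fin n → ℝ) (k : ℕ) (σ : Equiv.Perm (Fin n)) : ℝ :=
  ((∑ i ∈ pos n k, x (σ i)) ^ 2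
      - (((n : ℝ) - k) / ((n : ℝ) - 1)) * ∑ i ∈ pos n k, (x (σ i)) ^ 2)
    / ((k : ℝ) * ((k : ℝ) - 1))

def ff (n : ℕ) (x : Fin n → ℝ) (k : ℕ) (σ : Equiv.Perm (Fin n)) : ℝ := |PP n x k σ|

def ZZ (n : ℕ) (x : Fin n → ℝ) (k : ℕ) (σ : Equiv.Perm (Fin n)) : ℝ :=
  if h : k ≤ n then (Finset.Icc k n).sup' (Finset.nonempty_Icc.mpr h) (fun j => ff n x j σ)
  else 0

variable {n : ℕ} {x : Fin n → ℝ}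

lemma ff_nonneg (k : ℕ) (σ : Equiv.Perm (Fin n)) : 0 ≤ ff n x k σ := abs_nonneg _

lemma PP_invariant {j m : ℕ} (hjm : j ≤ m) (π σ : Equiv.Perm (Fin n))
    (hπ : ∀ i : Fin n, j ≤ (i:ℕ) → π i = i) :
    PP n x m (π.trans σ) = PP n x m σ := by
  unfold PP
  rw [show (∑ i ∈ pos n m, x ((π.trans σ) i)) = ∑ i ∈ pos n m, x (σ i) from
      sum_pos_invariant hjm π hπ (fun i => x (σ i)),
    show (∑ i ∈ pos n m, (x ((π.trans σ) i))^2) = ∑ i ∈ pos n m, (x (σ i))^2 from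
      sum_pos_invariant hjm π hπ (fun i => (x (σ i))^2)]

lemma ff_invariant {j m : ℕ} (hjm : j ≤ m) (π σ : Equiv.Perm (Fin n))
    (hπ : ∀ i : Fin n, j ≤ (i:ℕ) → π i = i) :
    ff n x m (π.trans σ) = ff n x m σ := by
  unfold ff; rw [PP_invariant hjm π σ hπ]

lemma ZZ_invariant {j k : ℕ} (hjk : j ≤ k) (π σ : Equiv.Perm (Fin n))
    (hπ : ∀ i : Fin n, j ≤ (i:ℕ) → π i = i) :
    ZZ n x k (π.trans σ) = ZZ n x k σ := by
  unfold ZZ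
  by_cases h : k ≤ n
  · simp only [dif_pos h]
    apply Finset.sup'_congr _ rfl
    intro m hm
    exact ff_invariant (le_trans hjk (Finset.mem_Icc.mp hm).1) π σ hπ
  · simp only [dif_neg h]

lemma ZZ_eq_max {k : ℕ} (hk : k + 1 ≤ n) (σ : Equiv.Perm (Fin n)) :
    ZZ n x k σ = max (ff n x k σ) (ZZ n x (k+1) σ) := by
  unfold ZZ
  rw [dif_pos (by omega : k ≤ n), dif_pos hk]
  apply le_antisymm
  · apply Finset.sup'_le
    intro m hm
    obtain ⟨h1, h2⟩ := Finset.mem_Icc.mp hm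
    rcases eq_or_lt_of_le h1 with rfl | h1'
    · exact le_max_left _ _
    · exact le_trans (Finset.le_sup' (fun j => ff n x j σ)
        (Finset.mem_Icc.mpr ⟨h1', h2⟩)) (le_max_right _ _)
  · apply max_le
    · exact Finset.le_sup' (fun j => ff n x j σ) (Finset.mem_Icc.mpr ⟨le_rfl, by omega⟩)
    · apply Finset.sup'_le
      intro m hm
      obtain ⟨h1, h2⟩ := Finset.mem_Icc.mp hm
      exact Finset.le_sup' (fun j => ff n x j σ) (Finset.mem_Icc.mpr ⟨by omega, h2⟩)

lemma ZZ_self (σ : Equiv.Perm (Fin n)) : ZZ n x n σ = ff n x n σ := by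
  unfold ZZ
  rw [dif_pos le_rfl]
  simp

lemma ff_le_ZZ {k m : ℕ} (hk : k ≤ m) (hm : m ≤ n) (σ : Equiv.Perm (Fin n)) :
    ff n x m σ ≤ ZZ n x k σ := by
  unfold ZZ
  rw [dif_pos (le_trans hk hm)]
  exact Finset.le_sup' (fun j => ff n x j σ) (Finset.mem_Icc.mpr ⟨hk, hm⟩)

lemma ZZ_nonneg {k : ℕ} (hk : k ≤ n) (σ : Equiv.Perm (Fin n)) : 0 ≤ ZZ n x k σ :=
  le_trans (ff_nonneg n σ) (ff_le_ZZ hk le_rfl σ)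

lemma ZZ_mono {k : ℕ} (hk : k + 1 ≤ n) (σ : Equiv.Perm (Fin n)) :
    ZZ n x (k+1) σ ≤ ZZ n x k σ := by
  rw [ZZ_eq_max hk]; exact le_max_right _ _

lemma PP_n_zero (hx : ∑ i, x i = 0) (σ : Equiv.Perm (Fin n)) :
    PP n x n σ = 0 := by
  unfold PP
  rw [pos_n]
  have h1 : ∑ i, x (σ i) = 0 := by
    rw [Equiv.sum_comp σ x]; exact hx
  rw [h1]
  simp

/-- the martingale identity -/
lemma martingale_id {j : ℕ} (hj3 : 3 ≤ j) (hjn : j ≤ n) (hn : 2 ≤ n) (σ : Equiv.Perm (Fin n)) :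
    (j : ℝ) * PP n x j σ
      = ∑ t ∈ pos n j, PP n x (j-1) ((Equiv.swap t ⟨j-1, by omega⟩).trans σ) := by
  set S := ∑ i ∈ pos n j, x (σ i) with hS
  set T := ∑ i ∈ pos n j, (x (σ i))^2 with hT
  set C : ℝ := ((n : ℝ) - ((j:ℝ)-1)) / ((n : ℝ) - 1) with hC
  set D : ℝ := (((j:ℝ))-1) * (((j:ℝ))-2) with hD
  have key : ∀ t ∈ pos n j,
      PP n x (j-1) ((Equiv.swap t ⟨j-1, by omega⟩).trans σ)
        = (S^2 - C*T)/D + (-2*S/D) * x (σ t) + ((1+C)/D) * (x (σ t))^2 := by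
    intro t ht
    unfold PP
    simp only [Equiv.trans_apply]
    rw [show (∑ i ∈ pos n (j-1), x (σ ((Equiv.swap t ⟨j-1, by omega⟩) i)))
          = S - x (σ t) from sum_pos_swap (by omega) hjn ht (fun i => x (σ i)),
      show (∑ i ∈ pos n (j-1), (x (σ ((Equiv.swap t ⟨j-1, by omega⟩) i)))^2)
          = T - (x (σ t))^2 from sum_pos_swap (by omega) hjn ht (fun i => (x (σ i))^2)]
    have c1 : ((j - 1 : ℕ) : ℝ) = (j:ℝ) - 1 := by
      push_cast [Nat.cast_sub (by omega : 1 ≤ j)]; ring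
    rw [c1, hC, hD]
    ring
  rw [Finset.sum_congr rfl key]
  rw [Finset.sum_add_distrib, Finset.sum_add_distrib, Finset.sum_const,
    ← Finset.mul_sum, ← Finset.mul_sum, ← hS, ← hT, card_pos hjn, nsmul_eq_mul]
  have hJ3 : (3:ℝ) ≤ (j:ℝ) := by exact_mod_cast hj3
  have hN2 : (2:ℝ) ≤ (n:ℝ) := by exact_mod_cast hn
  have hJ1 : ((j:ℝ) - 1) ≠ 0 := by nlinarith
  have hJ2 : ((j:ℝ) - 2) ≠ 0 := by nlinarith
  have hJ : (j:ℝ) ≠ 0 := by positivity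
  have hN1 : ((n:ℝ) - 1) ≠ 0 := by nlinarith
  unfold PP
  rw [← hS, ← hT, hC, hD]
  field_simp
  ring

/-- invariance predicate: W depends only on positions ≥ j -/
def Inv (n j : ℕ) (W : Equiv.Perm (Fin n) → ℝ) : Prop :=
  ∀ (π σ : Equiv.Perm (Fin n)), (∀ i : Fin n, j ≤ (i:ℕ) → π i = i) → W (π.trans σ) = W σ

lemma Inv_antitone {j j' : ℕ} (hjj' : j ≤ j') {W : Equiv.Perm (Fin n) → ℝ}
    (h : Inv n j' W) : Inv n j W := by
  intro π σ hπ
  exact h π σ (fun i hi => hπ i (le_trans hjj' hi))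

/-- one-step supermartingale-type inequality -/
lemma one_step {j : ℕ} (hj3 : 3 ≤ j) (hjn : j ≤ n) (hn : 2 ≤ n)
    {W : Equiv.Perm (Fin n) → ℝ} (hW0 : ∀ σ, 0 ≤ W σ) (hWinv : Inv n j W) :
    ∑ σ : Equiv.Perm (Fin n), ff n x j σ * W σ
      ≤ ∑ σ : Equiv.Perm (Fin n), ff n x (j-1) σ * W σ := by
  have hj0 : (0:ℝ) < (j:ℝ) := by
    have : (3:ℝ) ≤ (j:ℝ) := by exact_mod_cast hj3
    linarith
  rw [← mul_le_mul_iff_right₀ hj0, Finset.mul_sum, Finset.mul_sum]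
  have step1 : ∀ σ : Equiv.Perm (Fin n),
      (j:ℝ) * (ff n x j σ * W σ)
        ≤ ∑ t ∈ pos n j, ff n x (j-1) ((Equiv.swap t ⟨j-1, by omega⟩).trans σ) * W σ := by
    intro σ
    rw [← Finset.sum_mul, ← mul_assoc]
    apply mul_le_mul_of_nonneg_right _ (hW0 σ)
    calc (j:ℝ) * ff n x j σ = |(j:ℝ) * PP n x j σ| := by
          rw [abs_mul, abs_of_pos hj0]; rfl
      _ = |∑ t ∈ pos n j, PP n x (j-1) ((Equiv.swap t ⟨j-1, by omega⟩).trans σ)| := by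
          rw [martingale_id hj3 hjn hn σ]
      _ ≤ ∑ t ∈ pos n j, |PP n x (j-1) ((Equiv.swap t ⟨j-1, by omega⟩).trans σ)| :=
          Finset.abs_sum_le_sum_abs _ _
      _ = ∑ t ∈ pos n j, ff n x (j-1) ((Equiv.swap t ⟨j-1, by omega⟩).trans σ) := rfl
  calc ∑ σ : Equiv.Perm (Fin n), (j:ℝ) * (ff n x j σ * W σ)
      ≤ ∑ σ : Equiv.Perm (Fin n), ∑ t ∈ pos n j,
          ff n x (j-1) ((Equiv.swap t ⟨j-1, by omega⟩).trans σ) * W σ :=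
        Finset.sum_le_sum (fun σ _ => step1 σ)
    _ = ∑ t ∈ pos n j, ∑ σ : Equiv.Perm (Fin n),
          ff n x (j-1) ((Equiv.swap t ⟨j-1, by omega⟩).trans σ) * W σ := Finset.sum_comm
    _ = ∑ t ∈ pos n j, ∑ σ : Equiv.Perm (Fin n), ff n x (j-1) σ * W σ := by
        apply Finset.sum_congr rfl
        intro t ht
        set w : Fin n := ⟨j-1, by omega⟩ with hw
        have hfix : ∀ i : Fin n, j ≤ (i:ℕ) → (Equiv.swap t w) i = i := by
          intro i hi
          apply Equiv.swap_apply_of_ne_of_ne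
          · intro h; have := mem_pos.mp ht; rw [h] at hi; omega
          · intro h
            have : (i:ℕ) = j - 1 := by rw [h]
            omega
        -- reindex σ ↦ σ * (swap t w)  (i.e. (swap t w).trans σ)
        have := Equiv.sum_comp (Equiv.mulRight (Equiv.swap t w))
          (fun σ : Equiv.Perm (Fin n) => ff n x (j-1) σ * W σ)
        rw [← this]
        apply Finset.sum_congr rfl
        intro σ _
        have hmr : (Equiv.mulRight (Equiv.swap t w)) σ = (Equiv.swap t w).trans σ := rfl
        rw [hmr, hWinv (Equiv.swap t w) σ hfix]
    _ = ∑ σ : Equiv.Perm (Fin n), (j:ℝ) * (ff n x (j-1) σ * W σ) := by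
        rw [Finset.sum_const, card_pos hjn, nsmul_eq_mul, Finset.mul_sum]

/-- chain down to level 2 -/
lemma chain {j : ℕ} (hj2 : 2 ≤ j) (hjn : j ≤ n) (hn : 2 ≤ n)
    {W : Equiv.Perm (Fin n) → ℝ} (hW0 : ∀ σ, 0 ≤ W σ) (hWinv : Inv n j W) :
    ∑ σ : Equiv.Perm (Fin n), ff n x j σ * W σ
      ≤ ∑ σ : Equiv.Perm (Fin n), ff n x 2 σ * W σ := by
  induction j, hj2 using Nat.le_induction with
  | base => exact le_rfl
  | succ j hj2 ih =>
    have h1 : ∑ σ : Equiv.Perm (Fin n), ff n x (j+1) σ * W σ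
        ≤ ∑ σ : Equiv.Perm (Fin n), ff n x j σ * W σ := by
      have := one_step (x := x) (by omega : 3 ≤ j+1) hjn hn hW0 hWinv
      simpa using this
    exact le_trans h1 (ih (by omega) (Inv_antitone (by omega) hWinv))

lemma max_sq_le {a b : ℝ} (ha : 0 ≤ a) (hb : 0 ≤ b) :
    (max a b)^2 ≤ b^2 + 2*a*(max a b - b) := by
  rcases le_total a b with h | h
  · rw [max_eq_right h]; ring_nf; exact le_rfl
  · rw [max_eq_left h]; nlinarith

lemma ff_n_zero (hx : ∑ i, x i = 0) (σ : Equiv.Perm (Fin n)) : ff n x n σ = 0 := by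
  unfold ff; rw [PP_n_zero hx]; simp

lemma garsia (hx : ∑ i, x i = 0) (σ : Equiv.Perm (Fin n)) :
    ∀ d k, n - k = d → 2 ≤ k → k ≤ n →
    (ZZ n x k σ)^2
      ≤ 2 * ∑ j ∈ Finset.Icc k (n-1), ff n x j σ * (ZZ n x j σ - ZZ n x (j+1) σ) := by
  intro d
  induction d with
  | zero =>
    intro k hd hk2 hkn
    have hkn' : k = n := by omega
    subst hkn'
    rw [ZZ_self, ff_n_zero hx, Finset.Icc_eq_empty (by omega)]
    norm_num
  | succ d ih =>
    intro k hd hk2 hkn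
    have hk1 : k + 1 ≤ n := by omega
    have IH := ih (k+1) (by omega) (by omega) (by omega)
    have hicc : Finset.Icc k (n-1) = insert k (Finset.Icc (k+1) (n-1)) := by
      rw [Finset.Icc_add_one_left_eq_Ioc, Finset.Ioc_insert_left (by omega : k ≤ n - 1)]
    rw [hicc, Finset.sum_insert (by simp)]
    have hmax := max_sq_le (ff_nonneg (x := x) k σ) (ZZ_nonneg (x := x) hk1 σ)
    rw [← ZZ_eq_max hk1] at hmax
    calc (ZZ n x k σ)^2
        ≤ (ZZ n x (k+1) σ)^2 + 2 * ff n x k σ * (ZZ n x k σ - ZZ n x (k+1) σ) := hmax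
      _ ≤ 2 * ∑ j ∈ Finset.Icc (k+1) (n-1), ff n x j σ * (ZZ n x j σ - ZZ n x (j+1) σ)
            + 2 * ff n x k σ * (ZZ n x k σ - ZZ n x (k+1) σ) := by linarith [IH]
      _ = 2 * (ff n x k σ * (ZZ n x k σ - ZZ n x (k+1) σ)
            + ∑ j ∈ Finset.Icc (k+1) (n-1), ff n x j σ * (ZZ n x j σ - ZZ n x (j+1) σ)) := by
          ring

lemma telescope (g : ℕ → ℝ) {a b : ℕ} (ha : 1 ≤ a) (hab : a ≤ b) :
    ∑ j ∈ Finset.Icc a (b-1), (g j - g (j+1)) = g a - g b := by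
  induction b, hab using Nat.le_induction with
  | base =>
    rw [Finset.Icc_eq_empty (by omega)]
    simp
  | succ b hab ih =>
    have h1 : (b + 1) - 1 = b := by omega
    have h2 : b = (b - 1) + 1 := by omega
    rw [h1, h2, ← Finset.insert_Icc_right_eq_Icc_add_one (by omega : a ≤ b-1+1),
      Finset.sum_insert (by simp), ← h2, ih]
    ring

lemma sum_Z2_le (hn : 2 ≤ n) (hx : ∑ i, x i = 0) :
    ∑ σ : Equiv.Perm (Fin n), (ZZ n x 2 σ)^2
      ≤ 2 * ∑ σ : Equiv.Perm (Fin n), ff n x 2 σ * ZZ n x 2 σ := by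
  calc ∑ σ : Equiv.Perm (Fin n), (ZZ n x 2 σ)^2
      ≤ ∑ σ : Equiv.Perm (Fin n),
          2 * ∑ j ∈ Finset.Icc 2 (n-1), ff n x j σ * (ZZ n x j σ - ZZ n x (j+1) σ) :=
        Finset.sum_le_sum (fun σ _ => garsia hx σ (n-2) 2 (by omega) le_rfl hn)
    _ = 2 * ∑ j ∈ Finset.Icc 2 (n-1), ∑ σ : Equiv.Perm (Fin n),
          ff n x j σ * (ZZ n x j σ - ZZ n x (j+1) σ) := by
        rw [← Finset.mul_sum, Finset.sum_comm]
    _ ≤ 2 * ∑ j ∈ Finset.Icc 2 (n-1), ∑ σ : Equiv.Perm (Fin n),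
          ff n x 2 σ * (ZZ n x j σ - ZZ n x (j+1) σ) := by
        apply mul_le_mul_of_nonneg_left _ (by norm_num)
        apply Finset.sum_le_sum
        intro j hj
        obtain ⟨hj2, hjn1⟩ := Finset.mem_Icc.mp hj
        have hj1n : j + 1 ≤ n := by omega
        apply chain hj2 (by omega) hn
        · intro σ
          have := ZZ_mono (x := x) hj1n σ
          linarith
        · intro π σ hπ
          show ZZ n x j (π.trans σ) - ZZ n x (j+1) (π.trans σ) = _
          rw [ZZ_invariant le_rfl π σ hπ, ZZ_invariant (by omega : j ≤ j+1) π σ hπ]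
    _ = 2 * ∑ σ : Equiv.Perm (Fin n), ff n x 2 σ
          * ∑ j ∈ Finset.Icc 2 (n-1), (ZZ n x j σ - ZZ n x (j+1) σ) := by
        rw [Finset.sum_comm]
        congr 1
        apply Finset.sum_congr rfl
        intro σ _
        rw [Finset.mul_sum]
    _ = 2 * ∑ σ : Equiv.Perm (Fin n), ff n x 2 σ * ZZ n x 2 σ := by
        congr 1
        apply Finset.sum_congr rfl
        intro σ _
        rw [telescope (fun j => ZZ n x j σ) (by omega) hn]
        rw [ZZ_self, ff_n_zero hx]
        ring

lemma sum_Z2_sq_le (hn : 2 ≤ n) (hx : ∑ i, x i = 0) :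
    ∑ σ : Equiv.Perm (Fin n), (ZZ n x 2 σ)^2
      ≤ 4 * ∑ σ : Equiv.Perm (Fin n), (ff n x 2 σ)^2 := by
  set A := ∑ σ : Equiv.Perm (Fin n), (ZZ n x 2 σ)^2 with hA
  set B := ∑ σ : Equiv.Perm (Fin n), ff n x 2 σ * ZZ n x 2 σ with hB
  set Cc := ∑ σ : Equiv.Perm (Fin n), (ff n x 2 σ)^2 with hC
  have hAB : A ≤ 2 * B := sum_Z2_le hn hx
  have hCS : B^2 ≤ Cc * A := by
    rw [hB, hC, hA]
    exact Finset.sum_mul_sq_le_sq_mul_sq _ _ _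
  have hA0 : 0 ≤ A := Finset.sum_nonneg (fun σ _ => sq_nonneg _)
  have hC0 : 0 ≤ Cc := Finset.sum_nonneg (fun σ _ => sq_nonneg _)
  have hB0 : 0 ≤ B := Finset.sum_nonneg
    (fun σ _ => mul_nonneg (ff_nonneg _ _) (ZZ_nonneg hn σ))
  nlinarith

lemma master_inv (G : Fin n → Fin n → ℝ) {i j i' j' : Fin n} (hij : i ≠ j) (hij' : i' ≠ j') :
    ∑ σ : Equiv.Perm (Fin n), G (σ i) (σ j) = ∑ σ : Equiv.Perm (Fin n), G (σ i') (σ j') := by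
  set ρ1 := Equiv.swap i i' with hρ1
  set j0 := ρ1 j' with hj0
  set ρ := ρ1 * (Equiv.swap j j0) with hρ
  have hρi : ρ i = i' := by
    rw [hρ, Equiv.Perm.mul_apply]
    have h1 : i ≠ j0 := by
      intro h
      have : ρ1 i = ρ1 j0 := congrArg ρ1 h
      rw [hj0, Equiv.swap_apply_self] at this
      rw [hρ1, Equiv.swap_apply_left] at this
      exact hij' this
    rw [Equiv.swap_apply_of_ne_of_ne hij h1, hρ1, Equiv.swap_apply_left]
  have hρj : ρ j = j' := by
    rw [hρ, Equiv.Perm.mul_apply, Equiv.swap_apply_left, hj0, hρ1, Equiv.swap_apply_self]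
  have := Equiv.sum_comp (Equiv.mulRight ρ) (fun σ : Equiv.Perm (Fin n) => G (σ i) (σ j))
  rw [← this]
  apply Finset.sum_congr rfl
  intro σ _
  simp only [Equiv.coe_mulRight, Equiv.Perm.mul_apply, hρi, hρj]

lemma master_count (G : Fin n → Fin n → ℝ) (σ : Equiv.Perm (Fin n)) :
    ∑ p ∈ Finset.univ.offDiag, G (σ p.1) (σ p.2)
      = ∑ p ∈ Finset.univ.offDiag, G p.1 p.2 := by
  apply Finset.sum_nbij' (fun p => (σ p.1, σ p.2)) (fun p => (σ.symm p.1, σ.symm p.2))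
  · intro p hp
    obtain ⟨-, -, hne⟩ := Finset.mem_offDiag.mp hp
    exact Finset.mem_offDiag.mpr ⟨Finset.mem_univ _, Finset.mem_univ _,
      fun h => hne (σ.injective h)⟩
  · intro p hp
    obtain ⟨-, -, hne⟩ := Finset.mem_offDiag.mp hp
    exact Finset.mem_offDiag.mpr ⟨Finset.mem_univ _, Finset.mem_univ _,
      fun h => hne (σ.symm.injective h)⟩
  · intro p _; simp
  · intro p _; simp
  · intro p _; rfl

lemma master (hn : 2 ≤ n) (G : Fin n → Fin n → ℝ) :
    ((n:ℝ) * ((n:ℝ) - 1)) * ∑ σ : Equiv.Perm (Fin n), G (σ ⟨0, by omega⟩) (σ ⟨1, by omega⟩)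
      = (Nat.factorial n : ℝ) * ∑ p ∈ Finset.univ.offDiag, G p.1 p.2 := by
  have h01 : (⟨0, by omega⟩ : Fin n) ≠ ⟨1, by omega⟩ := by
    intro h; exact absurd (congrArg Fin.val h) (by simp)
  have key : ∑ p ∈ (Finset.univ : Finset (Fin n)).offDiag,
      (∑ σ : Equiv.Perm (Fin n), G (σ p.1) (σ p.2))
      = ∑ p ∈ (Finset.univ : Finset (Fin n)).offDiag,
        (∑ σ : Equiv.Perm (Fin n), G (σ ⟨0, by omega⟩) (σ ⟨1, by omega⟩)) := by
    apply Finset.sum_congr rfl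
    intro p hp
    obtain ⟨-, -, hne⟩ := Finset.mem_offDiag.mp hp
    exact master_inv G hne h01
  have lhs2 : ∑ p ∈ (Finset.univ : Finset (Fin n)).offDiag,
      (∑ σ : Equiv.Perm (Fin n), G (σ p.1) (σ p.2))
      = ∑ σ : Equiv.Perm (Fin n), ∑ p ∈ Finset.univ.offDiag, G p.1 p.2 := by
    rw [Finset.sum_comm]
    apply Finset.sum_congr rfl
    intro σ _
    exact master_count G σ
  rw [Finset.sum_const, Finset.offDiag_card, Finset.card_univ, Fintype.card_fin,
    nsmul_eq_mul] at key
  rw [Finset.sum_const, Finset.card_univ, Fintype.card_perm,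
    Fintype.card_fin, nsmul_eq_mul] at lhs2
  have hcast : ((n * n - n : ℕ) : ℝ) = (n:ℝ) * ((n:ℝ) - 1) := by
    have h1 : n ≤ n * n := Nat.le_mul_of_pos_left n (by omega)
    push_cast [Nat.cast_sub h1]
    ring
  rw [hcast] at key
  rw [← key, lhs2]

lemma poly_sum (s4 s3 s2 s1 : ℝ) (hs4 : s4 = ∑ i, (x i)^4) (hs3 : s3 = ∑ i, (x i)^3)
    (hs2 : s2 = ∑ i, (x i)^2) (hs1 : s1 = ∑ i, x i) (C0 C1 C2 C3 C4 : ℝ) :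
    ∑ b, (C0 + C1 * x b + C2 * (x b)^2 + C3 * (x b)^3 + C4 * (x b)^4)
      = (n:ℝ) * C0 + C1 * s1 + C2 * s2 + C3 * s3 + C4 * s4 := by
  rw [Finset.sum_add_distrib, Finset.sum_add_distrib, Finset.sum_add_distrib,
    Finset.sum_add_distrib, Finset.sum_const, ← Finset.mul_sum, ← Finset.mul_sum,
    ← Finset.mul_sum, ← Finset.mul_sum, Finset.card_univ, Fintype.card_fin,
    nsmul_eq_mul, hs1, hs2, hs3, hs4]

lemma terminal (hn : 2 ≤ n) (hx : ∑ i, x i = 0) :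
    ∑ σ : Equiv.Perm (Fin n), (ff n x 2 σ)^2
      ≤ (Nat.factorial n : ℝ)
          * (((∑ i, (x i)^2)^2 - ∑ i, (x i)^4) / ((n:ℝ)-1)^2) := by
  set e : ℝ := (n:ℝ) - 1 with he
  have hepos : (0:ℝ) < e := by
    have : (2:ℝ) ≤ (n:ℝ) := by exact_mod_cast hn
    rw [he]; linarith
  have he1 : (1:ℝ) ≤ e := by
    have : (2:ℝ) ≤ (n:ℝ) := by exact_mod_cast hn
    rw [he]; linarith
  set u : ℝ := 1/(2*e) with hu
  set G : Fin n → Fin n → ℝ :=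
    fun a b => (x a * x b + ((x a)^2 + (x b)^2) * u)^2 with hG
  have h01 : (⟨0, by omega⟩ : Fin n) ≠ ⟨1, by omega⟩ := by
    intro h; exact absurd (congrArg Fin.val h) (by simp)
  have hPP2 : ∀ σ : Equiv.Perm (Fin n),
      (ff n x 2 σ)^2 = G (σ ⟨0, by omega⟩) (σ ⟨1, by omega⟩) := by
    intro σ
    rw [show ff n x 2 σ = |PP n x 2 σ| from rfl, sq_abs]
    unfold PP
    rw [pos_two hn, Finset.sum_pair h01, Finset.sum_pair h01, hG]
    simp only
    rw [hu, he]
    have hne : ((n:ℝ) - 1) ≠ 0 := by rw [he] at hepos; linarith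
    field_simp
    ring
  -- sums of powers
  set s1 : ℝ := ∑ i, x i with hs1
  set s2 : ℝ := ∑ i, (x i)^2 with hs2
  set s3 : ℝ := ∑ i, (x i)^3 with hs3
  set s4 : ℝ := ∑ i, (x i)^4 with hs4
  have hs4nonneg : 0 ≤ s4 := Finset.sum_nonneg (fun i _ => by positivity)
  -- compute the off-diagonal sum
  have hdouble : ∑ a, ∑ b, G a b = 2*(n:ℝ)*u^2*s4 + 4*u*s1*s3 + (1+2*u^2)*s2^2 := by
    have inner : ∀ a : Fin n, ∑ b, G a b
        = (n:ℝ)*(u^2*(x a)^4) + (2*u*(x a)^3)*s1 + ((x a)^2 + 2*u^2*(x a)^2)*s2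
          + (2*u*(x a))*s3 + (u^2)*s4 := by
      intro a
      rw [show (∑ b, G a b) = ∑ b, ((u^2*(x a)^4) + (2*u*(x a)^3) * x b
          + ((x a)^2 + 2*u^2*(x a)^2) * (x b)^2 + (2*u*(x a)) * (x b)^3
          + (u^2) * (x b)^4) from Finset.sum_congr rfl (fun b _ => by rw [hG]; ring)]
      exact poly_sum s4 s3 s2 s1 hs4 hs3 hs2 hs1 _ _ _ _ _
    rw [Finset.sum_congr rfl (fun a _ => inner a)]
    rw [show (∑ a : Fin n, ((n:ℝ)*(u^2*(x a)^4) + (2*u*(x a)^3)*s1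
          + ((x a)^2 + 2*u^2*(x a)^2)*s2 + (2*u*(x a))*s3 + (u^2)*s4))
        = ∑ a : Fin n, ((u^2*s4) + (2*u*s3) * x a + ((1+2*u^2)*s2) * (x a)^2
          + (2*u*s1) * (x a)^3 + ((n:ℝ)*u^2) * (x a)^4) from
      Finset.sum_congr rfl (fun a _ => by ring)]
    rw [poly_sum s4 s3 s2 s1 hs4 hs3 hs2 hs1 _ _ _ _ _]
    ring
  have hdiag : ∑ a, G a a = (1+2*u)^2 * s4 := by
    rw [show (∑ a, G a a) = ∑ a, ((1+2*u)^2 * (x a)^4) from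
      Finset.sum_congr rfl (fun a _ => by rw [hG]; ring), ← Finset.mul_sum, ← hs4]
  have hoff : ∑ p ∈ (Finset.univ : Finset (Fin n)).offDiag, G p.1 p.2
      = 2*(n:ℝ)*u^2*s4 + (1+2*u^2)*s2^2 - (1+2*u)^2*s4 := by
    have hsplit : ∑ p ∈ Finset.univ.diag, G p.1 p.2
        + ∑ p ∈ (Finset.univ : Finset (Fin n)).offDiag, G p.1 p.2
        = ∑ a, ∑ b, G a b := by
      rw [← Finset.sum_union (Finset.disjoint_diag_offDiag _), Finset.diag_union_offDiag,
        ← Finset.sum_product']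
    rw [Finset.sum_diag] at hsplit
    have : ∑ a, G a a = (1+2*u)^2*s4 := hdiag
    rw [this, hdouble] at hsplit
    have hgoal : ∑ p ∈ (Finset.univ : Finset (Fin n)).offDiag, G p.1 p.2
        = 2*(n:ℝ)*u^2*s4 + 4*u*s1*s3 + (1+2*u^2)*s2^2 - (1+2*u)^2*s4 := by
      linarith [hsplit]
    rw [hgoal, hx]
    ring
  -- bound the off-diagonal sum
  have hbound : ∑ p ∈ (Finset.univ : Finset (Fin n)).offDiag, G p.1 p.2
      ≤ ((n:ℝ) * e) * ((s2^2 - s4) / e^2) := by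
    have hn2 : (2:ℝ) ≤ (n:ℝ) := by exact_mod_cast hn
    have hene : e ≠ 0 := ne_of_gt hepos
    have hkey : ((n:ℝ)*e)*((s2^2 - s4)/e^2)
        - (2*(n:ℝ)*u^2*s4 + (1+2*u^2)*s2^2 - (1+2*u)^2*s4)
        = ((2*(n:ℝ)-3)*s2^2 + (n:ℝ)*s4) / (2*e^2) := by
      rw [hu, he]
      have : ((n:ℝ) - 1) ≠ 0 := by rw [← he]; exact hene
      field_simp
      ring
    have hnum : 0 ≤ ((2*(n:ℝ)-3)*s2^2 + (n:ℝ)*s4) / (2*e^2) := by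
      apply div_nonneg _ (by positivity)
      have h1 : (0:ℝ) ≤ 2*(n:ℝ)-3 := by linarith
      have h2 : (0:ℝ) ≤ (n:ℝ) := by linarith
      nlinarith [sq_nonneg s2, hs4nonneg]
    rw [hoff]
    linarith [hkey, hnum]
  -- put it together with the master lemma
  have hmaster := master hn G
  have hsum : ∑ σ : Equiv.Perm (Fin n), (ff n x 2 σ)^2
      = ∑ σ : Equiv.Perm (Fin n), G (σ ⟨0, by omega⟩) (σ ⟨1, by omega⟩) :=
    Finset.sum_congr rfl (fun σ _ => hPP2 σ)
  have hnn1 : (0:ℝ) < (n:ℝ) * ((n:ℝ) - 1) := by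
    have : (2:ℝ) ≤ (n:ℝ) := by exact_mod_cast hn
    nlinarith
  rw [hsum]
  rw [← mul_le_mul_iff_right₀ hnn1, hmaster]
  calc (Nat.factorial n : ℝ) * ∑ p ∈ Finset.univ.offDiag, G p.1 p.2
      ≤ (Nat.factorial n : ℝ) * (((n:ℝ) * e) * ((s2^2 - s4) / e^2)) := by
        apply mul_le_mul_of_nonneg_left hbound
        positivity
    _ = (n:ℝ) * ((n:ℝ)-1) * ((Nat.factorial n : ℝ) * ((s2^2 - s4) / ((n:ℝ)-1)^2)) := by
        rw [he]; ring

end S13B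

open S13 S13B

theorem statement13 (n : ℕ) (hn : 2 ≤ n) (x : Fin n → ℝ) (hx : ∑ i, x i = 0) :
    (1 / (Nat.factorial n : ℝ)) * ∑ σ : Equiv.Perm (Fin n),
        (Finset.Icc 2 n).sup' (Finset.nonempty_Icc.mpr hn)
          (fun k =>
            |((∑ i ∈ Finset.univ.filter fun i : Fin n => (i : ℕ) < k, x (σ i)) ^ 2
                - (((n : ℝ) - k) / ((n : ℝ) - 1)) *
                  ∑ i ∈ Finset.univ.filter fun i : Fin n => (i : ℕ) < k, (x (σ i)) ^ 2)
              / ((k : ℝ) * ((k : ℝ) - 1))| ^ 2)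
      ≤ (4 / ((n : ℝ) - 1) ^ 2) * ((∑ i, (x i) ^ 2) ^ 2 - ∑ i, (x i) ^ 4) := by
  have hfac : (0:ℝ) < (Nat.factorial n : ℝ) := by
    exact_mod_cast Nat.factorial_pos n
  have hsup : ∀ σ : Equiv.Perm (Fin n),
      (Finset.Icc 2 n).sup' (Finset.nonempty_Icc.mpr hn)
          (fun k =>
            |((∑ i ∈ Finset.univ.filter fun i : Fin n => (i : ℕ) < k, x (σ i)) ^ 2
                - (((n : ℝ) - k) / ((n : ℝ) - 1)) *
                  ∑ i ∈ Finset.univ.filter fun i : Fin n => (i : ℕ) < k, (x (σ i)) ^ 2)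
              / ((k : ℝ) * ((k : ℝ) - 1))| ^ 2)
        = (ZZ n x 2 σ)^2 := by
    intro σ
    have heq : (fun k =>
            |((∑ i ∈ Finset.univ.filter fun i : Fin n => (i : ℕ) < k, x (σ i)) ^ 2
                - (((n : ℝ) - k) / ((n : ℝ) - 1)) *
                  ∑ i ∈ Finset.univ.filter fun i : Fin n => (i : ℕ) < k, (x (σ i)) ^ 2)
              / ((k : ℝ) * ((k : ℝ) - 1))| ^ 2)
        = fun k => (ff n x k σ)^2 := rfl
    rw [heq]
    have hZ : ZZ n x 2 σ
        = (Finset.Icc 2 n).sup' (Finset.nonempty_Icc.mpr hn) (fun j => ff n x j σ) := by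
      rw [ZZ, dif_pos hn]
    rw [hZ]
    -- sup of squares equals square of sup for nonneg
    apply le_antisymm
    · apply Finset.sup'_le
      intro k hk
      have h1 : ff n x k σ ≤ (Finset.Icc 2 n).sup' (Finset.nonempty_Icc.mpr hn)
          (fun j => ff n x j σ) := Finset.le_sup' (fun j => ff n x j σ) hk
      exact pow_le_pow_left₀ (ff_nonneg _ _) h1 2
    · obtain ⟨k0, hk0, hEq⟩ := Finset.exists_mem_eq_sup' (Finset.nonempty_Icc.mpr hn)
        (fun j => ff n x j σ)
      rw [hEq]
      exact Finset.le_sup' (fun k => (ff n x k σ)^2) hk0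
  rw [Finset.sum_congr rfl (fun σ _ => hsup σ)]
  have h1 : ∑ σ : Equiv.Perm (Fin n), (ZZ n x 2 σ)^2
      ≤ 4 * ((Nat.factorial n : ℝ)
          * (((∑ i, (x i)^2)^2 - ∑ i, (x i)^4) / ((n:ℝ)-1)^2)) := by
    calc ∑ σ : Equiv.Perm (Fin n), (ZZ n x 2 σ)^2
        ≤ 4 * ∑ σ : Equiv.Perm (Fin n), (ff n x 2 σ)^2 := sum_Z2_sq_le hn hx
      _ ≤ 4 * ((Nat.factorial n : ℝ)
            * (((∑ i, (x i)^2)^2 - ∑ i, (x i)^4) / ((n:ℝ)-1)^2)) := by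
          apply mul_le_mul_of_nonneg_left (terminal hn hx) (by norm_num)
  calc (1 / (Nat.factorial n : ℝ)) * ∑ σ : Equiv.Perm (Fin n), (ZZ n x 2 σ)^2
      ≤ (1 / (Nat.factorial n : ℝ)) * (4 * ((Nat.factorial n : ℝ)
          * (((∑ i, (x i)^2)^2 - ∑ i, (x i)^4) / ((n:ℝ)-1)^2))) := by
        apply mul_le_mul_of_nonneg_left h1 (by positivity)
    _ = 4 * (((∑ i, (x i)^2)^2 - ∑ i, (x i)^4) / ((n:ℝ)-1)^2) := by
        have hfne : (Nat.factorial n : ℝ) ≠ 0 := ne_of_gt hfac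
        rw [show (4:ℝ) * ((Nat.factorial n : ℝ)
            * (((∑ i, (x i)^2)^2 - ∑ i, (x i)^4) / ((n:ℝ)-1)^2))
          = (Nat.factorial n : ℝ)
            * (4 * (((∑ i, (x i)^2)^2 - ∑ i, (x i)^4) / ((n:ℝ)-1)^2)) from by ring,
          ← mul_assoc, one_div, inv_mul_cancel₀ hfne, one_mul]
    _ = (4 / ((n : ℝ) - 1) ^ 2) * ((∑ i, (x i) ^ 2) ^ 2 - ∑ i, (x i) ^ 4) := by
        ring

end
end
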